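/- arXiv:1201.0738 — 5 statements merged into one kernel-verified Lean document; each statement's English description precedes it below -/
import Mathlib

section
/- Let J_n be the Schwarz matrix with parameters b_0, ..., b_{n-1} and characteristic polynomial p(z) = p_0(z²) + z·p_1(z²), where p_0 and p_1 collect the even and odd parts. Then the polynomial q(z) = (-1)^⌊(n+1)/2⌋·(p_0(-z²) + (-1)ⁿ·z·p_1(-z²)) is the characteristic polynomial of the n×n matrix K_n with K(1,1) = b_0, K(i,i+1) = 1, K(i+1,i) = b_i, and zeros elsewhere. -/
open Polynomial Matrix

/-- The Schwarz matrix `J_n` with parameters `b 0, …, b (n-1)`: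
`J(1,1) = -b₀` (1-based), superdiagonal `1`, subdiagonal `-b₁, …, -b_{n-1}`. -/
def schwarzMatrix {n : ℕ} (b : Fin n → ℝ) : Matrix (Fin n) (Fin n) ℝ :=
  Matrix.of fun i j : Fin n =>
    if (i : ℕ) = 0 ∧ (j : ℕ) = 0 then -b i
    else if (i : ℕ) + 1 = (j : ℕ) then 1
    else if (i : ℕ) = (j : ℕ) + 1 then -b i
    else 0

/-- The multiset of complex roots of a real polynomial. -/
noncomputable def cRoots (p : Polynomial ℝ) : Multiset ℂ :=
  (p.map (algebraMap ℝ ℂ)).roots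

set_option linter.unreachableTactic false
set_option linter.unusedTactic false
set_option maxHeartbeats 1000000

noncomputable def Dpoly : ℕ → (ℕ → ℝ) → Polynomial ℝ
  | 0, _ => 1
  | 1, β => X + C (β 0)
  | (k+2), β => X * Dpoly (k+1) β + C (β (k+1)) * Dpoly k β

lemma Dpoly_congr (n : ℕ) (β γ : ℕ → ℝ) (h : ∀ i < n, β i = γ i) :
    Dpoly n β = Dpoly n γ := by
  induction n using Nat.strong_induction_on generalizing β γ with
  | _ n ih =>
    match n with
    | 0 => rfl
    | 1 => simp only [Dpoly, h 0 (by omega)]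
    | (m+2) =>
      simp only [Dpoly, h (m+1) (by omega),
        ih (m+1) (by omega) β γ (fun i hi => h i (by omega)),
        ih m (by omega) β γ (fun i hi => h i (by omega))]

lemma charmatrix_submatrix' {k l : ℕ} (M : Matrix (Fin l) (Fin l) ℝ) (f : Fin k → Fin l)
    (hf : Function.Injective f) :
    (charmatrix M).submatrix f f = charmatrix (M.submatrix f f) := by
  ext i j
  by_cases h : i = j
  · subst h; simp [charmatrix_apply_eq]
  · rw [Matrix.submatrix_apply, charmatrix_apply_ne _ _ _ (fun hc => h (hf hc)),
      charmatrix_apply_ne _ _ _ h, Matrix.submatrix_apply]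

lemma schwarz_submatrix {n : ℕ} (b : Fin (n+1) → ℝ) :
    (schwarzMatrix b).submatrix Fin.castSucc Fin.castSucc
      = schwarzMatrix (b ∘ Fin.castSucc) := by
  ext i j
  simp only [schwarzMatrix, Matrix.submatrix_apply, Matrix.of_apply, Function.comp_apply,
    Fin.coe_castSucc]

lemma charpoly_schwarz (n : ℕ) (b : Fin n → ℝ) :
    (schwarzMatrix b).charpoly = Dpoly n (fun i => if h : i < n then b ⟨i, h⟩ else 0) := by
  induction n using Nat.strong_induction_on with
  | _ n ih =>
    match n with
    | 0 => simp [Matrix.charpoly, Dpoly]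
    | 1 =>
      rw [Matrix.charpoly, Matrix.det_fin_one, charmatrix_apply_eq]
      have : schwarzMatrix b 0 0 = -b 0 := by simp [schwarzMatrix]
      rw [this]
      simp only [Dpoly]
      norm_num
    | (m+2) =>
      set M := schwarzMatrix b with hMdef
      set β : ℕ → ℝ := fun i => if h : i < m+2 then b ⟨i, h⟩ else 0 with hβ
      rw [Matrix.charpoly, Matrix.det_succ_row _ (Fin.last (m+1))]
      rw [Fin.sum_univ_castSucc, Fin.sum_univ_castSucc]
      have hrow : (Fin.last (m+1)).succAbove = Fin.castSucc := Fin.succAbove_last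
      -- the terms with column index < m vanish
      have hzero : ∀ j : Fin m,
          charmatrix M (Fin.last (m+1)) (Fin.castSucc (Fin.castSucc j)) = 0 := by
        intro j
        have hne : Fin.last (m+1) ≠ Fin.castSucc (Fin.castSucc j) :=
          Fin.ne_of_val_ne (by have := j.isLt; simp; omega)
        rw [charmatrix_apply_ne _ _ _ hne]
        have h0 : M (Fin.last (m+1)) (Fin.castSucc (Fin.castSucc j)) = 0 := by
          have := j.isLt
          simp only [hMdef, schwarzMatrix, Matrix.of_apply, Fin.val_last,
            Fin.coe_castSucc]
          rw [if_neg (by first | omega | (simp; omega) | simp), if_neg (by first | omega | (simp; omega) | simp), if_neg (by first | omega | (simp; omega) | simp)]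
        rw [h0, map_zero, neg_zero]
      have hsum0 : (∑ j : Fin m,
          (-1 : Polynomial ℝ) ^ ((Fin.last (m+1) : ℕ) + ((Fin.castSucc (Fin.castSucc j)) : ℕ)) *
            charmatrix M (Fin.last (m+1)) (Fin.castSucc (Fin.castSucc j)) *
            ((charmatrix M).submatrix (Fin.last (m+1)).succAbove
              (Fin.castSucc (Fin.castSucc j)).succAbove).det) = 0 := by
        refine Finset.sum_eq_zero fun j _ => ?_
        rw [hzero j]; ring
      rw [hsum0, zero_add]
      -- the last (diagonal) term
      have hdiag : charmatrix M (Fin.last (m+1)) (Fin.last (m+1)) = X := by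
        rw [charmatrix_apply_eq]
        have h0 : M (Fin.last (m+1)) (Fin.last (m+1)) = 0 := by
          simp only [hMdef, schwarzMatrix, Matrix.of_apply, Fin.val_last]
          rw [if_neg (by first | omega | (simp; omega) | simp), if_neg (by first | omega | (simp; omega) | simp), if_neg (by first | omega | (simp; omega) | simp)]
        rw [h0, map_zero, sub_zero]
      have hminor_last : ((charmatrix M).submatrix (Fin.last (m+1)).succAbove
          (Fin.last (m+1)).succAbove).det = Dpoly (m+1) β := by
        rw [hrow, charmatrix_submatrix' _ _ (Fin.castSucc_injective _), hMdef,
          schwarz_submatrix, ← Matrix.charpoly, ih (m+1) (by omega)]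
        refine Dpoly_congr _ _ _ fun i hi => ?_
        simp only [hβ, Function.comp]
        rw [dif_pos (by omega : i < m+1), dif_pos (by omega : i < m+2)]
        rfl
      -- the subdiagonal term
      have hsub : charmatrix M (Fin.last (m+1)) (Fin.castSucc (Fin.last m)) =
          C (b (Fin.last (m+1))) := by
        have hne : Fin.last (m+1) ≠ Fin.castSucc (Fin.last m) :=
          (Fin.castSucc_lt_last (Fin.last m)).ne'
        rw [charmatrix_apply_ne _ _ _ hne]
        have h0 : M (Fin.last (m+1)) (Fin.castSucc (Fin.last m)) = -b (Fin.last (m+1)) := by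
          simp only [hMdef, schwarzMatrix, Matrix.of_apply, Fin.val_last, Fin.coe_castSucc]
          rw [if_neg (by first | omega | (simp; omega) | simp), if_neg (by first | omega | (simp; omega) | simp), if_pos (by first | trivial | omega | (simp; omega) | simp)]
        rw [h0, map_neg, neg_neg]
      have hminor_mid : ((charmatrix M).submatrix (Fin.last (m+1)).succAbove
          (Fin.castSucc (Fin.last m)).succAbove).det = -Dpoly m β := by
        rw [hrow]
        set N := (charmatrix M).submatrix Fin.castSucc (Fin.castSucc (Fin.last m)).succAbove
          with hN
        rw [Matrix.det_succ_column _ (Fin.last m), Fin.sum_univ_castSucc]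
        have hcol : ∀ i : Fin (m+1), N i (Fin.last m) =
            charmatrix M (Fin.castSucc i) (Fin.last (m+1)) := by
          intro i
          rw [hN, Matrix.submatrix_apply, Fin.succAbove_castSucc_self, Fin.succ_last]
        have hNzero : ∀ i : Fin m, N (Fin.castSucc i) (Fin.last m) = 0 := by
          intro i
          rw [hcol]
          have hne : Fin.castSucc (Fin.castSucc i) ≠ Fin.last (m+1) :=
            Fin.ne_of_val_ne (by have := i.isLt; simp; omega)
          rw [charmatrix_apply_ne _ _ _ hne]
          have h0 : M (Fin.castSucc (Fin.castSucc i)) (Fin.last (m+1)) = 0 := by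
            have := i.isLt
            simp only [hMdef, schwarzMatrix, Matrix.of_apply, Fin.val_last, Fin.coe_castSucc]
            rw [if_neg (by first | omega | (simp; omega) | simp), if_neg (by first | omega | (simp; omega) | simp), if_neg (by first | omega | (simp; omega) | simp)]
          rw [h0, map_zero, neg_zero]
        have hsumN : (∑ i : Fin m,
            (-1 : Polynomial ℝ) ^ (((Fin.castSucc i) : ℕ) + ((Fin.last m : Fin (m+1)) : ℕ)) *
              N (Fin.castSucc i) (Fin.last m) *
              (N.submatrix (Fin.castSucc i).succAbove (Fin.last m).succAbove).det) = 0 := by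
          refine Finset.sum_eq_zero fun i _ => ?_
          rw [hNzero i]; ring
        rw [hsumN, zero_add]
        have hNlast : N (Fin.last m) (Fin.last m) = -1 := by
          rw [hcol]
          have hne : Fin.castSucc (Fin.last m) ≠ Fin.last (m+1) :=
            (Fin.castSucc_lt_last (Fin.last m)).ne
          rw [charmatrix_apply_ne _ _ _ hne]
          have h1 : M (Fin.castSucc (Fin.last m)) (Fin.last (m+1)) = 1 := by
            simp only [hMdef, schwarzMatrix, Matrix.of_apply, Fin.val_last, Fin.coe_castSucc]
            rw [if_neg (by first | omega | (simp; omega) | simp), if_pos (by first | trivial | omega | (simp; omega) | simp)]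
          rw [h1]; simp
        have hcomp : (Fin.castSucc (Fin.last m)).succAbove ∘ Fin.castSucc
            = Fin.castSucc ∘ (Fin.castSucc : Fin m → Fin (m+1)) := by
          funext j
          simp only [Function.comp_apply]
          exact Fin.succAbove_of_castSucc_lt _ _
            (by rw [Fin.castSucc_lt_castSucc_iff]; exact Fin.castSucc_lt_last j)
        have hminor2 : (N.submatrix (Fin.last m).succAbove (Fin.last m).succAbove).det
            = Dpoly m β := by
          rw [Fin.succAbove_last, hN, Matrix.submatrix_submatrix, hcomp,
            charmatrix_submatrix' _ _
              ((Fin.castSucc_injective _).comp (Fin.castSucc_injective _))]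
          have : (M.submatrix (Fin.castSucc ∘ Fin.castSucc) (Fin.castSucc ∘ Fin.castSucc))
              = schwarzMatrix (b ∘ Fin.castSucc ∘ Fin.castSucc) := by
            rw [hMdef, ← Matrix.submatrix_submatrix, schwarz_submatrix]
            exact schwarz_submatrix _
          rw [this, ← Matrix.charpoly, ih m (by omega)]
          refine Dpoly_congr _ _ _ fun i hi => ?_
          simp only [hβ, Function.comp]
          rw [dif_pos (by omega : i < m), dif_pos (by omega : i < m+2)]
          rfl
        rw [hNlast, hminor2]
        simp only [Fin.val_last]
        have : ((-1 : Polynomial ℝ)) ^ (m + m) = 1 := by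
          rw [← two_mul, pow_mul]; norm_num
        rw [this]; ring
      rw [hdiag, hsub, hminor_last, hminor_mid]
      have hsign1 : ((-1 : Polynomial ℝ)) ^ ((Fin.last (m+1) : ℕ) + ((Fin.castSucc (Fin.last m) : Fin (m+2)) : ℕ)) = -1 := by
        simp only [Fin.val_last, Fin.coe_castSucc]
        have : (m + 1) + m = 2 * m + 1 := by ring
        rw [this, pow_succ, pow_mul]; norm_num
      have hsign2 : ((-1 : Polynomial ℝ)) ^ ((Fin.last (m+1) : ℕ) + ((Fin.last (m+1) : Fin (m+2)) : ℕ)) = 1 := by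
        simp only [Fin.val_last]
        rw [← two_mul, pow_mul]; norm_num
      rw [hsign1, hsign2]
      have hblast : b (Fin.last (m+1)) = β (m+1) := by
        show b (Fin.last (m+1)) = if h : m+1 < m+2 then b ⟨m+1, h⟩ else 0
        rw [dif_pos (by omega : m+1 < m+2)]
        rfl
      rw [hblast]
      simp only [Dpoly]
      ring

lemma neg_one_pow_congr' {a b : ℕ} (h : a % 2 = b % 2) : ((-1 : ℝ)) ^ a = (-1) ^ b := by
  rw [← Nat.div_add_mod a 2, ← Nat.div_add_mod b 2, h, pow_add, pow_add, pow_mul, pow_mul]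
  norm_num

lemma Dpoly_natDegree_le (n : ℕ) (β : ℕ → ℝ) : (Dpoly n β).natDegree ≤ n := by
  induction n using Nat.strong_induction_on with
  | _ n ih =>
    match n with
    | 0 => simp [Dpoly]
    | 1 =>
      simp only [Dpoly]
      exact le_trans (natDegree_add_le _ _) (by simp)
    | (m+2) =>
      simp only [Dpoly]
      refine le_trans (natDegree_add_le _ _) (max_le ?_ ?_)
      · have h1 := ih (m+1) (by omega)
        have := natDegree_mul_le (p := (X : Polynomial ℝ)) (q := Dpoly (m+1) β)
        simp only [natDegree_X] at this
        omega
      · have h1 := ih m (by omega)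
        have := natDegree_mul_le (p := (C (β (m+1)) : Polynomial ℝ)) (q := Dpoly m β)
        simp only [natDegree_C] at this
        omega

lemma Dpoly_neg (n : ℕ) (β : ℕ → ℝ) (k : ℕ) :
    (Dpoly n (fun i => -β i)).coeff k = (-1 : ℝ) ^ ((n + 1 - k) / 2) * (Dpoly n β).coeff k := by
  induction n using Nat.strong_induction_on generalizing k with
  | _ n ih =>
    match n with
    | 0 =>
      simp only [Dpoly]
      rcases Nat.eq_zero_or_pos k with rfl | hk
      · simp
      · simp [coeff_one, hk.ne']
    | 1 =>
      simp only [Dpoly]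
      match k with
      | 0 => simp
      | 1 => simp
      | (k+2) => simp [coeff_C, coeff_X]
    | (m+2) =>
      simp only [Dpoly, coeff_add, coeff_C_mul]
      match k with
      | 0 =>
        simp only [mul_coeff_zero, coeff_X_zero, zero_mul, zero_add]
        rw [ih m (by omega) 0,
          show (m + 2 + 1 - 0) / 2 = (m + 1 - 0) / 2 + 1 from by omega, pow_succ]
        ring
      | (k+1) =>
        rw [coeff_X_mul, coeff_X_mul, ih (m+1) (by omega) k, ih m (by omega) (k+1)]
        have e2 : (m + 1 + 1 - k) / 2 = (m + 2 + 1 - (k + 1)) / 2 := by omega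
        rcases le_or_gt k m with h | h
        · rw [e2, show (m + 2 + 1 - (k+1)) / 2 = (m + 1 - (k+1)) / 2 + 1 from by omega,
            pow_succ]
          ring
        · have hz : (Dpoly m β).coeff (k+1) = 0 :=
            coeff_eq_zero_of_natDegree_lt (lt_of_le_of_lt (Dpoly_natDegree_le m β) (by omega))
          rw [hz, e2]; ring


lemma comp_X_sq_coeff_even (p : Polynomial ℝ) (j : ℕ) :
    (p.comp (X^2)).coeff (2*j) = p.coeff j := by
  induction p using Polynomial.induction_on' with
  | add p q hp hq => simp [add_comp, hp, hq]
  | monomial i a =>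
    rw [← C_mul_X_pow_eq_monomial, mul_comp, C_comp, X_pow_comp, ← pow_mul,
      coeff_C_mul, coeff_X_pow, coeff_C_mul, coeff_X_pow]
    by_cases h : i = j
    · subst h; simp
    · rw [if_neg (by omega), if_neg (by omega)]

lemma comp_X_sq_coeff_odd (p : Polynomial ℝ) (j : ℕ) :
    (p.comp (X^2)).coeff (2*j+1) = 0 := by
  induction p using Polynomial.induction_on' with
  | add p q hp hq => simp [add_comp, hp, hq]
  | monomial i a =>
    rw [← C_mul_X_pow_eq_monomial, mul_comp, C_comp, X_pow_comp, ← pow_mul,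
      coeff_C_mul, coeff_X_pow]
    rw [if_neg (by omega)]
    ring

lemma comp_neg_X_sq_coeff_even (p : Polynomial ℝ) (j : ℕ) :
    (p.comp (-(X^2))).coeff (2*j) = (-1)^j * p.coeff j := by
  induction p using Polynomial.induction_on' with
  | add p q hp hq => simp [add_comp, hp, hq]; ring
  | monomial i a =>
    rw [← C_mul_X_pow_eq_monomial, mul_comp, C_comp, X_pow_comp, neg_pow, ← pow_mul]
    have hC : ((-1 : Polynomial ℝ))^i = C ((-1 : ℝ)^i) := by
      simp
    rw [hC, coeff_C_mul, coeff_C_mul, coeff_X_pow, coeff_C_mul, coeff_X_pow]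
    by_cases h : i = j
    · subst h; simp [mul_comm]
    · rw [if_neg (by omega), if_neg (by omega)]; ring

lemma comp_neg_X_sq_coeff_odd (p : Polynomial ℝ) (j : ℕ) :
    (p.comp (-(X^2))).coeff (2*j+1) = 0 := by
  induction p using Polynomial.induction_on' with
  | add p q hp hq => simp [add_comp, hp, hq]
  | monomial i a =>
    rw [← C_mul_X_pow_eq_monomial, mul_comp, C_comp, X_pow_comp, neg_pow, ← pow_mul]
    have hC : ((-1 : Polynomial ℝ))^i = C ((-1 : ℝ)^i) := by
      simp
    rw [hC, coeff_C_mul, coeff_C_mul, coeff_X_pow, if_neg (by omega)]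
    ring


/-- if `p(z) = p₀(z²) + z·p₁(z²)` is the characteristic polynomial of the
Schwarz matrix `J_n`, then `q(z) = (-1)^⌊(n+1)/2⌋·(p₀(-z²) + (-1)ⁿ·z·p₁(-z²))` is the
characteristic polynomial of the matrix `K_n` obtained by changing the signs of all
the parameters (i.e. `K(1,1) = b₀`, superdiagonal `1`, subdiagonal `b₁, …, b_{n-1}`). -/
theorem schwarz_stmt3 {n : ℕ} (hn : 0 < n) (b : Fin n → ℝ) (hb : ∀ i, b i ≠ 0)
    (p0 p1 : Polynomial ℝ)
    (hp : (schwarzMatrix b).charpoly =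
      p0.comp (Polynomial.X ^ 2) + Polynomial.X * p1.comp (Polynomial.X ^ 2)) :
    (schwarzMatrix fun i => -b i).charpoly =
      Polynomial.C ((-1 : ℝ) ^ ((n + 1) / 2)) *
        (p0.comp (-(Polynomial.X ^ 2)) +
          Polynomial.C ((-1 : ℝ) ^ n) * (Polynomial.X * p1.comp (-(Polynomial.X ^ 2)))) := by
  classical
  set β : ℕ → ℝ := fun i => if h : i < n then b ⟨i, h⟩ else 0 with hβ
  have hA := charpoly_schwarz n b
  have hA' := charpoly_schwarz n (fun i => -b i)
  have hfun : (fun i => if h : i < n then (fun i => -b i) ⟨i, h⟩ else 0) =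
      fun i => -β i := by
    funext i
    by_cases h : i < n
    · simp only [hβ, dif_pos h]
    · simp only [hβ, dif_neg h, neg_zero]
  rw [hA', hfun]
  rw [hA] at hp
  have hdeg : ∀ k, n < k → (Dpoly n β).coeff k = 0 := fun k hk =>
    coeff_eq_zero_of_natDegree_lt (lt_of_le_of_lt (Dpoly_natDegree_le n β) hk)
  have hUeven : ∀ j, (p0.comp (X^2) + X * p1.comp (X^2)).coeff (2*j) = p0.coeff j := by
    intro j
    rw [coeff_add, comp_X_sq_coeff_even]
    rcases j with _ | j
    · simp
    · rw [show 2*(j+1) = (2*j+1)+1 from by ring, coeff_X_mul, comp_X_sq_coeff_odd, add_zero]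
  have hUodd : ∀ j, (p0.comp (X^2) + X * p1.comp (X^2)).coeff (2*j+1) = p1.coeff j := by
    intro j
    rw [coeff_add, comp_X_sq_coeff_odd, zero_add, coeff_X_mul, comp_X_sq_coeff_even]
  have hp0 : ∀ j, n < 2*j → p0.coeff j = 0 := by
    intro j hj
    rw [← hUeven, ← hp]
    exact hdeg _ hj
  have hp1 : ∀ j, n < 2*j+1 → p1.coeff j = 0 := by
    intro j hj
    rw [← hUodd, ← hp]
    exact hdeg _ hj
  refine Polynomial.ext fun k => ?_
  rw [Dpoly_neg, hp]
  rcases Nat.even_or_odd k with ⟨j, hj⟩ | ⟨j, hj⟩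
  · have hk : k = 2*j := by omega
    subst hk
    rw [hUeven]
    rw [coeff_C_mul, coeff_add, coeff_C_mul]
    rw [comp_neg_X_sq_coeff_even]
    have hz : (X * p1.comp (-(X^2))).coeff (2*j) = 0 := by
      rcases j with _ | j
      · simp
      · rw [show 2*(j+1) = (2*j+1)+1 from by ring, coeff_X_mul, comp_neg_X_sq_coeff_odd]
    rw [hz, mul_zero, add_zero, ← mul_assoc, ← pow_add]
    rcases le_or_gt (2*j) n with h | h
    · rw [neg_one_pow_congr' (by omega : (n + 1 - 2*j)/2 % 2 = ((n+1)/2 + j) % 2)]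
    · rw [hp0 j h, mul_zero, mul_zero]
  · have hk : k = 2*j+1 := hj
    subst hk
    rw [hUodd]
    rw [coeff_C_mul, coeff_add, coeff_C_mul]
    have hz : (p0.comp (-(X^2))).coeff (2*j+1) = 0 := comp_neg_X_sq_coeff_odd _ _
    rw [hz, zero_add, coeff_X_mul, comp_neg_X_sq_coeff_even, ← mul_assoc, ← mul_assoc,
      ← pow_add, ← pow_add]
    rcases le_or_gt (2*j+1) n with h | h
    · rw [neg_one_pow_congr'
        (show (n + 1 - (2*j+1))/2 % 2 = ((n+1)/2 + n + j) % 2 by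
          rcases Nat.even_or_odd n with ⟨m, hm⟩ | ⟨m, hm⟩ <;> subst hm <;> omega)]
    · rw [hp1 j h, mul_zero, mul_zero]
end

section
/- Let p be a real monic polynomial of even degree n = 2l, and let A_n be the n×n matrix with A(i,i+1) = 1, A(i+1,i) = -b_i for 1 ≤ i ≤ n-1, diagonal zero, where the b_i come from the Schwarz matrix J_n (with additionally J(1,1) = -b_0) whose characteristic polynomial is p. Write p(z) = p_0(z²) + z·p_1(z²). Then p_0(z²) = det(zI_n - A_n) and z·p_1(z²) = b_0·det(zI_{n-1} - A_{n-1}), where A_{n-1} is the trailing principal (n-1)×(n-1) submatrix of A_n. -/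
open Polynomial Matrix

/-- The auxiliary matrix `A_n`: the Schwarz matrix with its `(1,1)` entry replaced by `0`. -/
def schwarzAux {n : ℕ} (b : Fin n → ℝ) : Matrix (Fin n) (Fin n) ℝ :=
  Matrix.of fun i j : Fin n =>
    if (i : ℕ) + 1 = (j : ℕ) then 1
    else if (i : ℕ) = (j : ℕ) + 1 then -b i
    else 0

/-- The trailing principal submatrix obtained by deleting the first row and column. -/
def trailing {n : ℕ} (M : Matrix (Fin n) (Fin n) ℝ) : Matrix (Fin (n - 1)) (Fin (n - 1)) ℝ :=
  M.submatrix (fun i => ⟨(i : ℕ) + 1, by have := i.isLt; omega⟩)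
    (fun j => ⟨(j : ℕ) + 1, by have := j.isLt; omega⟩)


lemma det_updateRow_e0 {m : ℕ} (N : Matrix (Fin (m+1)) (Fin (m+1)) (Polynomial ℝ)) :
    (N.updateRow 0 (Pi.single 0 1)).det = (N.submatrix Fin.succ Fin.succ).det := by
  rw [Matrix.det_succ_row_zero, Fintype.sum_eq_single 0]
  · have h1 : (N.updateRow 0 (Pi.single 0 1)).submatrix Fin.succ (Fin.succAbove 0)
        = N.submatrix Fin.succ Fin.succ := by
      ext i j : 1
      rw [Matrix.submatrix_apply, Matrix.updateRow_ne (Fin.succ_ne_zero i), Fin.succAbove_zero]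
      rfl
    rw [h1]
    simp
  · intro j hj
    simp [Matrix.updateRow_self, Pi.single_eq_of_ne hj]

lemma charpoly_add_std {m : ℕ} (N : Matrix (Fin (m+1)) (Fin (m+1)) ℝ) (c : ℝ) :
    (N + Matrix.single 0 0 c).charpoly
      = N.charpoly - Polynomial.C c * (N.submatrix Fin.succ Fin.succ).charpoly := by
  set v : Fin (m+1) → ℝ[X] := fun j => if j = 0 then -Polynomial.C c else 0 with hv
  have h1 : charmatrix (N + Matrix.single 0 0 c)
      = (charmatrix N).updateRow 0 ((charmatrix N 0) + v) := by
    ext i j : 1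
    by_cases hi : i = 0
    · subst hi
      rw [Matrix.updateRow_self]
      by_cases hj : j = (0 : Fin (m+1))
      · subst hj
        simp [charmatrix_apply_eq, Matrix.single, hv]
        ring
      · rw [Pi.add_apply, charmatrix_apply_ne _ _ _ (Ne.symm hj),
          charmatrix_apply_ne _ _ _ (Ne.symm hj)]
        simp [Matrix.add_apply, Matrix.single, hv, hj, Ne.symm hj]
    · rw [Matrix.updateRow_ne hi]
      by_cases hij : i = j
      · subst hij
        simp [charmatrix_apply_eq, Matrix.single, Ne.symm hi]
      · rw [charmatrix_apply_ne _ _ _ hij, charmatrix_apply_ne _ _ _ hij]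
        simp [Matrix.single, Ne.symm hi]
  have h2 : (charmatrix N).submatrix Fin.succ Fin.succ
      = charmatrix (N.submatrix Fin.succ Fin.succ) := by
    ext i j : 1
    by_cases h : i = j
    · subst h; simp
    · rw [Matrix.submatrix_apply,
        charmatrix_apply_ne _ _ _ (by simpa [Fin.succ_inj] using h),
        charmatrix_apply_ne _ _ _ h]
      rfl
  have hrow : v = (-Polynomial.C c) •
      ((Pi.single (0 : Fin (m+1)) (1 : ℝ[X])) : Fin (m+1) → ℝ[X]) := by
    funext j
    by_cases h : j = 0 <;> simp [hv, h, Pi.single_apply]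
  unfold Matrix.charpoly
  rw [h1, Matrix.det_updateRow_add, Matrix.updateRow_eq_self, hrow,
    Matrix.det_updateRow_smul, det_updateRow_e0, h2]
  ring

lemma charpoly_comp_neg {k : ℕ} (M : Matrix (Fin k) (Fin k) ℝ)
    (hM : ∀ i j : Fin k, M i j ≠ 0 → (i : ℕ) + 1 = j ∨ (i : ℕ) = (j : ℕ) + 1) :
    M.charpoly.comp (-X) = (-1) ^ k * M.charpoly := by
  have hdiag : ∀ i : Fin k, M i i = 0 := by
    intro i
    by_contra h
    rcases hM i i h with h' | h' <;> omega
  have hcomp : M.charpoly.comp (-X)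
      = ((charmatrix M).map fun p => p.comp (-X)).det := by
    have hfun : (fun p : ℝ[X] => p.comp (-X)) = ⇑((Polynomial.aeval (-X : ℝ[X])).toRingHom) := by
      funext p
      simp [Polynomial.comp_eq_aeval]
    rw [Matrix.charpoly, show ((charmatrix M).det.comp (-X))
        = ((Polynomial.aeval (-X : ℝ[X])).toRingHom) (charmatrix M).det from rfl,
      RingHom.map_det, RingHom.mapMatrix_apply, ← hfun]
  have h2 : ((charmatrix M).map fun p => p.comp (-X)) = -(charmatrix (-M)) := by
    ext i j : 1
    rw [Matrix.map_apply, Matrix.neg_apply]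
    by_cases h : i = j
    · subst h
      rw [charmatrix_apply_eq, charmatrix_apply_eq, Matrix.neg_apply, hdiag]
      simp
    · rw [charmatrix_apply_ne _ _ _ h, charmatrix_apply_ne _ _ _ h, Matrix.neg_apply]
      simp
  have h4 : ((charmatrix (-M))).det = (charmatrix M).det := by
    set d : Fin k → ℝ[X] := fun i => Polynomial.C ((-1 : ℝ) ^ (i : ℕ)) with hd
    have hdd : ∀ i, d i * d i = 1 := by
      intro i
      rw [hd]
      rw [← Polynomial.C_mul, ← pow_add, Even.neg_one_pow ⟨(i : ℕ), rfl⟩, Polynomial.C_1]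
    have hsim : charmatrix (-M) = Matrix.diagonal d * charmatrix M * Matrix.diagonal d := by
      ext i j : 1
      rw [Matrix.mul_diagonal, Matrix.diagonal_mul]
      by_cases h : i = j
      · subst h
        rw [charmatrix_apply_eq, charmatrix_apply_eq, Matrix.neg_apply, hdiag, neg_zero]
        rw [show (X : ℝ[X]) - C 0 = X by simp]
        rw [mul_comm (d i) X, mul_assoc, hdd, mul_one]
      · rw [charmatrix_apply_ne _ _ _ h, charmatrix_apply_ne _ _ _ h]
        by_cases hz : M i j = 0
        · simp [hz, Matrix.neg_apply]
        · have hadj := hM i j hz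
          have hodd : Odd ((i : ℕ) + (j : ℕ)) := by
            rcases hadj with h' | h'
            · exact ⟨i, by omega⟩
            · exact ⟨j, by omega⟩
          have hdij : d i * d j = -1 := by
            rw [hd]
            rw [← Polynomial.C_mul, ← pow_add, Odd.neg_one_pow hodd, map_neg, Polynomial.C_1]
          rw [Matrix.neg_apply, map_neg, neg_neg]
          linear_combination (Polynomial.C (M i j)) * hdij
    have hdet : (Matrix.diagonal d).det * (Matrix.diagonal d).det = 1 := by
      rw [Matrix.det_diagonal, ← Finset.prod_mul_distrib]
      apply Finset.prod_eq_one
      intro i _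
      exact hdd i
    rw [hsim, Matrix.det_mul, Matrix.det_mul]
    linear_combination (charmatrix M).det * hdet
  rw [hcomp, h2, Matrix.det_neg, Fintype.card_fin, h4, Matrix.charpoly]

/-- for a Schwarz matrix of even size `n = 2l` with characteristic polynomial
`p(z) = p₀(z²) + z·p₁(z²)`, one has `p₀(z²) = det(zI - A_n)` and
`z·p₁(z²) = b₀·det(zI - A_{n-1})`. -/
theorem schwarz_stmt4 {l : ℕ} (hl : 0 < l) (b : Fin (2 * l) → ℝ) (hb : ∀ i, b i ≠ 0)
    (p0 p1 : Polynomial ℝ)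
    (hp : (schwarzMatrix b).charpoly =
      p0.comp (Polynomial.X ^ 2) + Polynomial.X * p1.comp (Polynomial.X ^ 2)) :
    p0.comp (Polynomial.X ^ 2) = (schwarzAux b).charpoly ∧
    Polynomial.X * p1.comp (Polynomial.X ^ 2) =
      Polynomial.C (b ⟨0, by omega⟩) * (trailing (schwarzAux b)).charpoly := by
  set A := schwarzAux b with hA
  set T := trailing A with hT
  set b0 : ℝ := b ⟨0, by omega⟩ with hb0
  have hm : 2 * l = (2 * l - 1) + 1 := by omega
  set e : Fin (2 * l) ≃ Fin ((2 * l - 1) + 1) := finCongr hm with he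
  -- key decomposition
  have key : (schwarzMatrix b).charpoly = A.charpoly + Polynomial.C b0 * T.charpoly := by
    have hJ : (Matrix.reindex e e (schwarzMatrix b)) =
        Matrix.reindex e e A + Matrix.single 0 0 (-b0) := by
      ext i j : 1
      have hvi : ((e.symm i : Fin (2 * l)) : ℕ) = (i : ℕ) := rfl
      have hvj : ((e.symm j : Fin (2 * l)) : ℕ) = (j : ℕ) := rfl
      simp only [Matrix.reindex_apply, Matrix.submatrix_apply, Matrix.add_apply,
        schwarzMatrix, schwarzAux, Matrix.of_apply, Matrix.single, Matrix.of_apply]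
      rw [hvi, hvj]
      by_cases h0 : (i : ℕ) = 0 ∧ (j : ℕ) = 0
      · have hi0 : (0 : Fin ((2*l-1)+1)) = i := by
          apply Fin.ext; simp [h0.1.symm]; omega
        have hj0 : (0 : Fin ((2*l-1)+1)) = j := by
          apply Fin.ext; simp [h0.2.symm]; omega
        have : (e.symm i : Fin (2*l)) = ⟨0, by omega⟩ := by
          apply Fin.ext; simp [hvi, h0.1]
        rw [this]
        simp only [h0, and_self, if_true, ← hi0, ← hj0, and_self, if_true]
        rw [hA, schwarzAux]
        simp [← hb0]
        have h00 : ((e.symm (0 : Fin (2*l-1+1))) : ℕ) = 0 := rfl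
        omega
      · have : ¬((0 : Fin ((2*l-1)+1)) = i ∧ (0 : Fin ((2*l-1)+1)) = j) := by
          rintro ⟨hi, hj⟩
          exact h0 ⟨by rw [← hi]; rfl, by rw [← hj]; rfl⟩
        rw [hA, schwarzAux]
        simp only [Matrix.of_apply]
        rw [hvi, hvj]
        simp [h0, this]
        intro hi hj
        exact absurd ⟨hi.symm, hj.symm⟩ this
    have hsub : (Matrix.reindex e e A).submatrix Fin.succ Fin.succ = T := by
      ext i j : 1
      rw [hT, trailing]
      simp only [Matrix.reindex_apply, Matrix.submatrix_apply]
      congr 1 <;> apply Fin.ext <;> rfl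
    calc (schwarzMatrix b).charpoly
        = (Matrix.reindex e e (schwarzMatrix b)).charpoly :=
          (Matrix.charpoly_reindex e _).symm
      _ = (Matrix.reindex e e A + Matrix.single 0 0 (-b0)).charpoly := by rw [hJ]
      _ = (Matrix.reindex e e A).charpoly
            - Polynomial.C (-b0) * ((Matrix.reindex e e A).submatrix Fin.succ Fin.succ).charpoly :=
          charpoly_add_std _ _
      _ = A.charpoly + Polynomial.C b0 * T.charpoly := by
          rw [hsub, Matrix.charpoly_reindex, map_neg, neg_mul, sub_neg_eq_add]
  -- parity facts
  have hAadj : ∀ i j : Fin (2 * l), A i j ≠ 0 → (i : ℕ) + 1 = j ∨ (i : ℕ) = (j : ℕ) + 1 := by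
    intro i j h
    rw [hA, schwarzAux] at h
    simp only [Matrix.of_apply] at h
    by_cases h1 : (i : ℕ) + 1 = (j : ℕ)
    · exact Or.inl h1
    · by_cases h2 : (i : ℕ) = (j : ℕ) + 1
      · exact Or.inr h2
      · simp [h1, h2] at h
  have hTadj : ∀ i j : Fin (2 * l - 1), T i j ≠ 0 → (i : ℕ) + 1 = j ∨ (i : ℕ) = (j : ℕ) + 1 := by
    intro i j h
    rw [hT, trailing] at h
    have := hAadj _ _ h
    simp only [Matrix.submatrix_apply] at this ⊢
    omega
  have hAe : A.charpoly.comp (-X) = A.charpoly := by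
    rw [charpoly_comp_neg A hAadj, Even.neg_one_pow ⟨l, by ring⟩, one_mul]
  have hTo : T.charpoly.comp (-X) = -T.charpoly := by
    rw [charpoly_comp_neg T hTadj, Odd.neg_one_pow ⟨l - 1, by omega⟩, neg_one_mul]
  have hEe : (p0.comp (X ^ 2)).comp (-X) = p0.comp (X ^ 2) := by
    rw [Polynomial.comp_assoc]
    congr 1
    simp [pow_comp, neg_sq]
  have hOo : (X * p1.comp (X ^ 2)).comp (-X) = -(X * p1.comp (X ^ 2)) := by
    rw [Polynomial.mul_comp, Polynomial.X_comp, Polynomial.comp_assoc]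
    simp [pow_comp, neg_sq]
  have eq1 : p0.comp (X ^ 2) + X * p1.comp (X ^ 2)
      = A.charpoly + Polynomial.C b0 * T.charpoly := by rw [← hp, key]
  have eq2 : p0.comp (X ^ 2) - X * p1.comp (X ^ 2)
      = A.charpoly - Polynomial.C b0 * T.charpoly := by
    have := congrArg (fun q => q.comp (-X)) eq1
    simp only [Polynomial.add_comp] at this
    rw [hEe, hOo, hAe, Polynomial.mul_comp, Polynomial.C_comp, hTo] at this
    linear_combination this
  have hfirst : p0.comp (X ^ 2) = A.charpoly := by
    have h2 : (2 : ℝ[X]) * (p0.comp (X ^ 2)) = 2 * A.charpoly := by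
      linear_combination eq1 + eq2
    exact mul_left_cancel₀ two_ne_zero h2
  refine ⟨hfirst, ?_⟩
  linear_combination eq1 - hfirst
end

section
/- If all entries b_0, b_1, ..., b_{n-1} of the Schwarz matrix J_n are positive, then every eigenvalue of J_n has negative real part. -/
open Polynomial Matrix

/-- if all parameters of the Schwarz matrix are positive, then every
eigenvalue has negative real part. -/
theorem schwarz_stmt5 {n : ℕ} (b : Fin n → ℝ) (hb : ∀ i, 0 < b i) :
    ∀ z ∈ cRoots (schwarzMatrix b).charpoly, z.re < 0 := by
  intro z hz
  classical
  set M := schwarzMatrix b with hM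
  set A : Matrix (Fin n) (Fin n) ℂ := M.map (algebraMap ℝ ℂ) with hA
  have hz' : ((schwarzMatrix b).charpoly.map (algebraMap ℝ ℂ)).IsRoot z :=
    Polynomial.isRoot_of_mem_roots hz
  have hroot : (A.charpoly).eval z = 0 := by
    rw [hA, Matrix.charpoly_map]
    exact hz'
  have hdet : (z • (1 : Matrix (Fin n) (Fin n) ℂ) - A).det = 0 := by
    have h2 : (charmatrix A).map (Polynomial.evalRingHom z) =
        z • (1 : Matrix (Fin n) (Fin n) ℂ) - A := by
      ext i j
      by_cases h : i = j
      · subst h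
        simp [charmatrix_apply_eq, Matrix.one_apply_eq]
      · simp [charmatrix_apply_ne _ _ _ h, Matrix.one_apply_ne h]
    calc (z • (1 : Matrix (Fin n) (Fin n) ℂ) - A).det
        = ((charmatrix A).map (Polynomial.evalRingHom z)).det := by rw [h2]
      _ = (Polynomial.evalRingHom z) (charmatrix A).det := by
          rw [RingHom.map_det, RingHom.mapMatrix_apply]
      _ = 0 := hroot
  obtain ⟨v, hvne, hv⟩ := (Matrix.exists_mulVec_eq_zero_iff).2 hdet
  have heig0 : A.mulVec v = z • v := by
    have h := hv
    rw [Matrix.sub_mulVec, Matrix.smul_mulVec, Matrix.one_mulVec, sub_eq_zero] at h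
    exact h.symm
  have heig : ∀ i : Fin n, (∑ j, A i j * v j) = z * v i := by
    intro i
    have h := congrFun heig0 i
    simpa [Matrix.mulVec, dotProduct] using h
  obtain ⟨i₁, hi₁⟩ : ∃ i, v i ≠ 0 := by
    by_contra h
    push_neg at h
    exact hvne (funext h)
  have hn : 0 < n := i₁.pos
  set i0 : Fin n := ⟨0, hn⟩ with hi0
  have hi0c : (i0 : ℕ) = 0 := rfl
  -- Lyapunov weights
  set B : ℕ → ℝ := fun k => if h : k < n then b ⟨k, h⟩ else 1 with hB
  have hBpos : ∀ k, 0 < B k := by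
    intro k
    by_cases h : k < n <;> simp [hB, h, hb]
  set d : ℕ → ℝ := fun i => ∏ k ∈ Finset.Ico (i + 1) n, B k with hd
  have hdpos : ∀ i, 0 < d i := fun i => Finset.prod_pos fun k _ => hBpos k
  have hdstep : ∀ i : ℕ, i + 1 < n → d i = B (i + 1) * d (i + 1) := by
    intro i h
    simpa [hd] using Finset.prod_eq_prod_Ico_succ_bot h B
  -- key pointwise Lyapunov identity
  have key : ∀ i j : Fin n, d i.val * M i j + d j.val * M j i
      = if (i : ℕ) = 0 ∧ (j : ℕ) = 0 then -(2 * b i0 * d 0) else 0 := by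
    intro i j
    by_cases h00 : (i : ℕ) = 0 ∧ (j : ℕ) = 0
    · obtain ⟨hi, hj⟩ := h00
      have hij : i = j := Fin.ext (by omega)
      subst hij
      have hii0 : i = i0 := Fin.ext (by omega)
      subst hii0
      have hMe : M i0 i0 = -b i0 := by
        simp [hM, schwarzMatrix, hi0c]
      rw [if_pos ⟨hi, hj⟩, hMe, hi0c]
      ring
    · rw [if_neg h00]
      by_cases h1 : (i : ℕ) + 1 = (j : ℕ)
      · have hjn : (i : ℕ) + 1 < n := h1 ▸ j.isLt
        have hMij : M i j = 1 := by
          simp only [hM, schwarzMatrix, Matrix.of_apply]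
          rw [if_neg h00, if_pos h1]
        have hMji : M j i = -b j := by
          simp only [hM, schwarzMatrix, Matrix.of_apply]
          rw [if_neg (by omega), if_neg (by omega), if_pos (by omega)]
        have hbj : B ((i : ℕ) + 1) = b j := by
          rw [hB]
          simp only
          rw [dif_pos hjn]
          congr 1
          exact Fin.ext h1
        have hds := hdstep (i : ℕ) hjn
        rw [hbj, h1] at hds
        rw [hMij, hMji, hds]
        ring
      · by_cases h2 : (i : ℕ) = (j : ℕ) + 1
        · have hin : (j : ℕ) + 1 < n := h2 ▸ i.isLt
          have hMij : M i j = -b i := by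
            simp only [hM, schwarzMatrix, Matrix.of_apply]
            rw [if_neg h00, if_neg h1, if_pos h2]
          have hMji : M j i = 1 := by
            simp only [hM, schwarzMatrix, Matrix.of_apply]
            rw [if_neg (by omega), if_pos (by omega)]
          have hbi : B ((j : ℕ) + 1) = b i := by
            rw [hB]
            simp only
            rw [dif_pos hin]
            congr 1
            exact Fin.ext h2.symm
          have hds := hdstep (j : ℕ) hin
          rw [hbi, ← h2] at hds
          rw [hMij, hMji, hds]
          ring
        · have hMij : M i j = 0 := by
            simp only [hM, schwarzMatrix, Matrix.of_apply]
            rw [if_neg h00, if_neg h1, if_neg h2]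
          have hMji : M j i = 0 := by
            simp only [hM, schwarzMatrix, Matrix.of_apply]
            rw [if_neg (by omega), if_neg (by omega), if_neg (by omega)]
          rw [hMij, hMji]
          ring
  -- the Lyapunov sum
  set S : ℂ := ∑ i, ∑ j, (d i.val : ℂ) * A i j * (v j * (starRingEnd ℂ) (v i)) with hS
  set Sig : ℝ := ∑ i, d i.val * Complex.normSq (v i) with hSig
  have hS1 : S = z * (Sig : ℂ) := by
    rw [hS, hSig]
    push_cast
    rw [Finset.mul_sum]
    refine Finset.sum_congr rfl fun i _ => ?_
    calc ∑ j, (d i.val : ℂ) * A i j * (v j * (starRingEnd ℂ) (v i))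
        = ((d i.val : ℂ) * (starRingEnd ℂ) (v i)) * ∑ j, A i j * v j := by
          rw [Finset.mul_sum]
          refine Finset.sum_congr rfl fun j _ => ?_
          ring
      _ = ((d i.val : ℂ) * (starRingEnd ℂ) (v i)) * (z * v i) := by rw [heig i]
      _ = z * ((d i.val : ℂ) * ((Complex.normSq (v i) : ℝ) : ℂ)) := by
          rw [← Complex.mul_conj]
          ring
  have hconjA : ∀ i j : Fin n, (starRingEnd ℂ) (A i j) = A i j := by
    intro i j
    simp [hA, Matrix.map_apply]
  have hconjS : (starRingEnd ℂ) S =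
      ∑ i, ∑ j, (d j.val : ℂ) * A j i * ((starRingEnd ℂ) (v i) * v j) := by
    rw [hS, map_sum, Finset.sum_comm]
    refine Finset.sum_congr rfl fun i _ => ?_
    rw [map_sum]
    refine Finset.sum_congr rfl fun j _ => ?_
    simp only [_root_.map_mul, hconjA, Complex.conj_ofReal, RingHomCompTriple.comp_apply,
      Complex.conj_conj, RingHom.id_apply]
  have hS2 : S + (starRingEnd ℂ) S =
      ∑ i, ∑ j, ((d i.val * M i j + d j.val * M j i : ℝ) : ℂ)
        * (v j * (starRingEnd ℂ) (v i)) := by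
    rw [hconjS, hS, ← Finset.sum_add_distrib]
    refine Finset.sum_congr rfl fun i _ => ?_
    rw [← Finset.sum_add_distrib]
    refine Finset.sum_congr rfl fun j _ => ?_
    have e1 : A i j = ((M i j : ℝ) : ℂ) := rfl
    have e2 : A j i = ((M j i : ℝ) : ℂ) := rfl
    rw [e1, e2]
    push_cast
    ring
  have hS3 : S + (starRingEnd ℂ) S =
      ((-(2 * b i0 * d 0) * Complex.normSq (v i0) : ℝ) : ℂ) := by
    rw [hS2]
    have hterm : ∀ i j : Fin n,
        ((d i.val * M i j + d j.val * M j i : ℝ) : ℂ) * (v j * (starRingEnd ℂ) (v i))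
        = if i = i0 ∧ j = i0
            then ((-(2 * b i0 * d 0) : ℝ) : ℂ) * (v i0 * (starRingEnd ℂ) (v i0)) else 0 := by
      intro i j
      rw [key i j]
      by_cases h : i = i0 ∧ j = i0
      · obtain ⟨ha, hb'⟩ := h
        subst ha; subst hb'
        rw [if_pos ⟨hi0c, hi0c⟩, if_pos ⟨rfl, rfl⟩]
      · have hcond : ¬((i : ℕ) = 0 ∧ (j : ℕ) = 0) := by
          rintro ⟨ha, hb'⟩
          exact h ⟨Fin.ext ha, Fin.ext hb'⟩
        rw [if_neg hcond, if_neg h]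
        push_cast
        ring
    calc (∑ i, ∑ j, ((d i.val * M i j + d j.val * M j i : ℝ) : ℂ)
          * (v j * (starRingEnd ℂ) (v i)))
        = ∑ i : Fin n, ∑ j : Fin n, if i = i0 ∧ j = i0
            then ((-(2 * b i0 * d 0) : ℝ) : ℂ) * (v i0 * (starRingEnd ℂ) (v i0)) else 0 := by
          exact Finset.sum_congr rfl fun i _ => Finset.sum_congr rfl fun j _ => hterm i j
      _ = ((-(2 * b i0 * d 0) : ℝ) : ℂ) * (v i0 * (starRingEnd ℂ) (v i0)) := by
          simp [ite_and, Finset.sum_ite_eq']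
      _ = ((-(2 * b i0 * d 0) * Complex.normSq (v i0) : ℝ) : ℂ) := by
          rw [Complex.mul_conj]
          push_cast
          ring
  have hre : 2 * z.re * Sig = -(2 * b i0 * d 0) * Complex.normSq (v i0) := by
    have h := hS3
    rw [hS1] at h
    have hcs : (starRingEnd ℂ) (z * (Sig : ℂ)) = (starRingEnd ℂ) z * (Sig : ℂ) := by
      simp [_root_.map_mul, Complex.conj_ofReal]
    rw [hcs] at h
    have h2 : (z + (starRingEnd ℂ) z) * (Sig : ℂ)
        = ((-(2 * b i0 * d 0) * Complex.normSq (v i0) : ℝ) : ℂ) := by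
      rw [← h]; ring
    rw [Complex.add_conj] at h2
    exact_mod_cast h2
  have hSigpos : 0 < Sig := by
    rw [hSig]
    refine Finset.sum_pos' (fun i _ => ?_) ⟨i₁, Finset.mem_univ i₁, ?_⟩
    · exact mul_nonneg (hdpos _).le (Complex.normSq_nonneg _)
    · exact mul_pos (hdpos _) (Complex.normSq_pos.mpr hi₁)
  -- observability: v i0 ≠ 0
  have hv0 : v i0 ≠ 0 := by
    intro h0
    have hall : ∀ m : ℕ, ∀ i : Fin n, (i : ℕ) ≤ m → v i = 0 := by
      intro m
      induction m with
      | zero =>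
        intro i hi
        have : i = i0 := Fin.ext (by omega)
        rw [this]; exact h0
      | succ m ih =>
        intro i hi
        rcases Nat.lt_or_ge (i : ℕ) (m + 1) with h | h
        · exact ih i (by omega)
        · have hieq : (i : ℕ) = m + 1 := by omega
          have hmn : m < n := lt_trans (by omega : m < m + 1) (hieq ▸ i.isLt)
          set jm : Fin n := ⟨m, hmn⟩ with hjm
          have hjmc : (jm : ℕ) = m := rfl
          have hrow := heig jm
          have hvj : v jm = 0 := ih jm (le_of_eq hjmc)
          rw [hvj, mul_zero] at hrow
          have hsum : ∑ k, A jm k * v k = v i := by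
            rw [Finset.sum_eq_single i]
            · have hA1 : A jm i = 1 := by
                have hM1 : M jm i = 1 := by
                  simp only [hM, schwarzMatrix, Matrix.of_apply]
                  rw [if_neg (by omega), if_pos (by omega)]
                have : A jm i = ((M jm i : ℝ) : ℂ) := rfl
                rw [this, hM1]
                norm_num
              rw [hA1, one_mul]
            · intro k _ hk
              rcases Nat.lt_or_ge (k : ℕ) (m + 1) with hk2 | hk2
              · rw [ih k (by omega), mul_zero]
              · have hk3 : (k : ℕ) ≠ m + 1 := fun hc => hk (Fin.ext (by omega))
                have hA0 : A jm k = 0 := by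
                  have hM0 : M jm k = 0 := by
                    simp only [hM, schwarzMatrix, Matrix.of_apply]
                    rw [if_neg (by omega), if_neg (by omega), if_neg (by omega)]
                  have : A jm k = ((M jm k : ℝ) : ℂ) := rfl
                  rw [this, hM0]
                  norm_num
                rw [hA0, zero_mul]
            · intro hni
              exact absurd (Finset.mem_univ i) hni
          rw [hsum] at hrow
          exact hrow
    exact hi₁ (hall (i₁ : ℕ) i₁ le_rfl)
  have hrhs : -(2 * b i0 * d 0) * Complex.normSq (v i0) < 0 := by
    have h1 := hb i0
    have h2 := hdpos 0
    have h3 := Complex.normSq_pos.mpr hv0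
    nlinarith [mul_pos (mul_pos h1 h2) h3]
  by_contra hge
  push_neg at hge
  have hnn : 0 ≤ 2 * z.re * Sig := mul_nonneg (mul_nonneg (by norm_num) hge) hSigpos.le
  linarith
end

section
/- If all entries b_0, b_1, ..., b_{n-1} of the Schwarz matrix J_n are negative, then all eigenvalues λ_1, ..., λ_n of J_n are real and simple and, suitably ordered, satisfy λ_1 > -λ_2 > λ_3 > ⋯ > (-1)^{n-1}λ_n > 0. -/
open Polynomial Matrix

noncomputable def Pc (c : ℕ → ℝ) : ℕ → Polynomial ℝ
  | 0 => 1
  | 1 => X - C (c 0)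
  | (k+2) => X * Pc c (k+1) - C (c (k+1)) * Pc c k

noncomputable def Wc (c : ℕ → ℝ) : ℕ → Polynomial ℝ
  | 0 => 0
  | 1 => 1
  | (k+2) => X * Wc c (k+1) - C (c (k+1)) * Wc c k

lemma Pc_monic_natDegree (c : ℕ → ℝ) :
    ∀ k, (Pc c k).Monic ∧ (Pc c k).natDegree = k
  | 0 => ⟨monic_one, natDegree_one⟩
  | 1 => ⟨monic_X_sub_C _, natDegree_X_sub_C _⟩
  | (k+2) => by
    obtain ⟨h1m, h1d⟩ := Pc_monic_natDegree c (k+1)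
    obtain ⟨h0m, h0d⟩ := Pc_monic_natDegree c k
    have hXm : (X * Pc c (k+1)).Monic := monic_X.mul h1m
    have hXd : (X * Pc c (k+1)).natDegree = k+2 := by
      rw [natDegree_mul X_ne_zero h1m.ne_zero, natDegree_X, h1d]; ring
    have hXdeg : (X * Pc c (k+1)).degree = ((k+2 : ℕ) : WithBot ℕ) := by
      rw [degree_eq_natDegree (hXm.ne_zero), hXd]
    have hdeglt : (-(C (c (k+1)) * Pc c k)).degree < (X * Pc c (k+1)).degree := by
      rw [degree_neg, hXdeg]
      have h1 : (C (c (k+1)) * Pc c k).degree ≤ (0 : WithBot ℕ) + (k : WithBot ℕ) := by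
        have hC : (C (c (k+1))).degree ≤ (0 : WithBot ℕ) := degree_C_le
        have hP : (Pc c k).degree ≤ ((Pc c k).natDegree : WithBot ℕ) := degree_le_natDegree
        rw [h0d] at hP
        exact (degree_mul_le _ _).trans (add_le_add hC hP)
      refine lt_of_le_of_lt h1 ?_
      rw [zero_add]
      exact_mod_cast by omega
    constructor
    · show (Pc c (k+2)).Monic
      rw [show Pc c (k+2) = X * Pc c (k+1) + -(C (c (k+1)) * Pc c k) by rw [Pc]; ring]
      exact hXm.add_of_left hdeglt
    · show (Pc c (k+2)).natDegree = k+2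
      rw [show Pc c (k+2) = X * Pc c (k+1) + -(C (c (k+1)) * Pc c k) by rw [Pc]; ring]
      have := degree_add_eq_left_of_degree_lt hdeglt
      rw [hXdeg] at this
      exact natDegree_eq_of_degree_eq_some this

lemma Pc_casoratian (c : ℕ → ℝ) :
    ∀ k, Pc c k * Wc c (k+1) - Pc c (k+1) * Wc c k
      = C (∏ i ∈ Finset.Icc 1 k, c i)
  | 0 => by
    simp [Pc, Wc, show Finset.Icc 1 0 = ∅ from rfl]
  | (k+1) => by
    have ih := Pc_casoratian c k
    rw [Finset.prod_Icc_succ_top (by omega), _root_.map_mul, ← ih]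
    show Pc c (k+1) * (X * Wc c (k+1) - C (c (k+1)) * Wc c k)
      - (X * Pc c (k+1) - C (c (k+1)) * Pc c k) * Wc c (k+1) = _
    ring

lemma Pc_reflect (c : ℕ → ℝ) :
    ∀ k, ((-1 : Polynomial ℝ))^k * (Pc c k).comp (-X)
      = Pc c k + C (2 * c 0) * Wc c k
  | 0 => by simp [Pc, Wc]
  | 1 => by
    show (-1 : Polynomial ℝ)^1 * ((X - C (c 0)).comp (-X)) = (X - C (c 0)) + C (2 * c 0) * 1
    have h2 : (2:ℝ) * c 0 = c 0 + c 0 := by ring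
    rw [h2, _root_.map_add]
    simp only [pow_one, sub_comp, X_comp, C_comp]
    ring
  | (k+2) => by
    have ih1 := Pc_reflect c (k+1)
    have ih0 := Pc_reflect c k
    have key : ∀ m, ((-1 : Polynomial ℝ))^m * ((-1 : Polynomial ℝ))^m = 1 := by
      intro m; rw [← pow_add]; exact Even.neg_one_pow ⟨m, rfl⟩
    have e1 : (Pc c (k+1)).comp (-X)
        = ((-1 : Polynomial ℝ))^(k+1) * (Pc c (k+1) + C (2 * c 0) * Wc c (k+1)) := by
      rw [← ih1, ← mul_assoc, key, one_mul]
    have e0 : (Pc c k).comp (-X)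
        = ((-1 : Polynomial ℝ))^k * (Pc c k + C (2 * c 0) * Wc c k) := by
      rw [← ih0, ← mul_assoc, key, one_mul]
    show ((-1 : Polynomial ℝ))^(k+2) * ((X * Pc c (k+1) - C (c (k+1)) * Pc c k).comp (-X))
      = (X * Pc c (k+1) - C (c (k+1)) * Pc c k) + C (2 * c 0) * (X * Wc c (k+1) - C (c (k+1)) * Wc c k)
    rw [sub_comp, mul_comp, X_comp, mul_comp, C_comp, e1, e0]
    have p2 : ((-1 : Polynomial ℝ))^(k+2) = ((-1 : Polynomial ℝ))^k := by
      rw [pow_succ, pow_succ]; ring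
    have p1 : ((-1 : Polynomial ℝ))^(k+1) = -((-1 : Polynomial ℝ))^k := by
      rw [pow_succ]; ring
    rw [p2, p1]
    have hk := key k
    linear_combination (X * (Pc c (k+1) + C (2*c 0) * Wc c (k+1)) - C (c (k+1)) * (Pc c k + C (2*c 0) * Wc c k)) * hk

lemma sign_prod_split (f : ℕ → ℝ) (k j : ℕ) (hj : j ≤ k)
    (hneg : ∀ i, i < j → f i < 0) (hpos : ∀ i, j ≤ i → i < k → 0 < f i) :
    0 < (-1 : ℝ)^j * ∏ i ∈ Finset.range k, f i := by
  rw [← Finset.prod_range_mul_prod_Ico f hj, ← mul_assoc]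
  have h1 : (0:ℝ) < (-1 : ℝ)^j * ∏ i ∈ Finset.range j, f i := by
    have : (-1 : ℝ)^j * ∏ i ∈ Finset.range j, f i = ∏ i ∈ Finset.range j, (-(f i)) := by
      rw [show (∏ i ∈ Finset.range j, -f i) = ∏ i ∈ Finset.range j, ((-1) * f i) by
        apply Finset.prod_congr rfl; intros; ring]
      rw [Finset.prod_mul_distrib, Finset.prod_const, Finset.card_range]
    rw [this]
    exact Finset.prod_pos (fun i hi => by
      have := hneg i (Finset.mem_range.mp hi); linarith)
  have h2 : (0:ℝ) < ∏ i ∈ Finset.Ico j k, f i :=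
    Finset.prod_pos (fun i hi => by
      obtain ⟨h1', h2'⟩ := Finset.mem_Ico.mp hi; exact hpos i h1' h2')
  exact mul_pos h1 h2

lemma sign_prod_filter (f : ℕ → ℝ) (s : Finset ℕ) (h0 : ∀ i ∈ s, f i ≠ 0) :
    0 < (-1 : ℝ)^(s.filter (fun i => f i < 0)).card * ∏ i ∈ s, f i := by
  classical
  induction s using Finset.induction_on with
  | empty => simp
  | @insert a s ha ih =>
    have hfa : f a ≠ 0 := h0 a (Finset.mem_insert_self a s)
    have ih' := ih (fun i hi => h0 i (Finset.mem_insert_of_mem hi))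
    rw [Finset.prod_insert ha, Finset.filter_insert]
    by_cases hneg : f a < 0
    · rw [if_pos hneg, Finset.card_insert_of_notMem (by simp [ha]), pow_succ]
      have : (-1 : ℝ) ^ (Finset.filter (fun i => f i < 0) s).card * -1 * (f a * ∏ i ∈ s, f i)
          = (-f a) * ((-1 : ℝ) ^ (Finset.filter (fun i => f i < 0) s).card * ∏ i ∈ s, f i) := by
        ring
      rw [this]
      exact mul_pos (by linarith) ih'
    · rw [if_neg hneg]
      have hfa' : 0 < f a := lt_of_le_of_ne (not_lt.mp hneg) (Ne.symm hfa)
      have : (-1 : ℝ) ^ (Finset.filter (fun i => f i < 0) s).card * (f a * ∏ i ∈ s, f i)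
          = f a * ((-1 : ℝ) ^ (Finset.filter (fun i => f i < 0) s).card * ∏ i ∈ s, f i) := by
        ring
      rw [this]
      exact mul_pos hfa' ih'

lemma parity_of_signs {a b : ℕ} {z : ℝ} (ha : 0 < (-1 : ℝ)^a * z)
    (hb : 0 < (-1 : ℝ)^b * z) : a % 2 = b % 2 := by
  rcases Nat.even_or_odd a with hea | hoa <;> rcases Nat.even_or_odd b with heb | hob
  · rw [Nat.even_iff] at hea heb; omega
  · exfalso
    rw [hea.neg_one_pow] at ha; rw [hob.neg_one_pow] at hb
    simp at ha hb; linarith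
  · exfalso
    rw [hoa.neg_one_pow] at ha; rw [heb.neg_one_pow] at hb
    simp at ha hb; linarith
  · rw [Nat.odd_iff] at hoa hob; omega

lemma monic_eq_prod_of_roots :
    ∀ (k : ℕ) (p : Polynomial ℝ), p.Monic → p.natDegree = k → ∀ (x : ℕ → ℝ),
    (∀ i j, i < k → j < k → i ≠ j → x i ≠ x j) →
    (∀ i, i < k → p.eval (x i) = 0) →
    p = ∏ i ∈ Finset.range k, (X - C (x i)) := by
  intro k
  induction k with
  | zero =>
    intro p hm hdeg x _ _
    simp only [Finset.range_zero, Finset.prod_empty]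
    exact hm.natDegree_eq_zero.mp hdeg
  | succ k ih =>
    intro p hm hdeg x hinj hroot
    have hroot_k : IsRoot p (x k) := hroot k (Nat.lt_succ_self k)
    obtain ⟨q, hq⟩ := (dvd_iff_isRoot).mpr hroot_k
    have hXsC : (X - C (x k)).Monic := monic_X_sub_C _
    have hqm : q.Monic := by
      have := hm
      rw [hq] at this
      exact (Monic.of_mul_monic_left hXsC this)
    have hqdeg : q.natDegree = k := by
      have hdm : p.natDegree = (X - C (x k)).natDegree + q.natDegree := by
        rw [hq]; exact natDegree_mul hXsC.ne_zero hqm.ne_zero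
      rw [hdeg, natDegree_X_sub_C] at hdm
      omega
    have hqroot : ∀ i, i < k → q.eval (x i) = 0 := by
      intro i hi
      have h0 := hroot i (Nat.lt_succ_of_lt hi)
      rw [hq, eval_mul, eval_sub, eval_X, eval_C] at h0
      have hne : x i - x k ≠ 0 := sub_ne_zero_of_ne
        (hinj i k (Nat.lt_succ_of_lt hi) (Nat.lt_succ_self k) (Nat.ne_of_lt hi))
      exact (mul_eq_zero.mp h0).resolve_left hne
    have := ih q hqm hqdeg x
      (fun i j hi hj hij => hinj i j (Nat.lt_succ_of_lt hi) (Nat.lt_succ_of_lt hj) hij)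
      hqroot
    rw [Finset.prod_range_succ, hq, this]
    ring

lemma charmatrix_submatrix_castSucc {m : ℕ} (M : Matrix (Fin (m+1)) (Fin (m+1)) ℝ) :
    (charmatrix M).submatrix Fin.castSucc Fin.castSucc
      = charmatrix (M.submatrix Fin.castSucc Fin.castSucc) := by
  ext i j
  by_cases h : i = j
  · subst h
    simp [charmatrix_apply_eq, Matrix.submatrix_apply]
  · have h2 : (Fin.castSucc i) ≠ (Fin.castSucc j) := fun hc => h (Fin.castSucc_injective _ hc)
    simp [Matrix.submatrix_apply, charmatrix_apply_ne _ _ _ h2, charmatrix_apply_ne _ _ _ h]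

lemma schwarz_submatrix_s7 (c : ℕ → ℝ) (k : ℕ) :
    (schwarzMatrix (fun i : Fin (k+1) => -c (i : ℕ))).submatrix Fin.castSucc Fin.castSucc
      = schwarzMatrix (fun i : Fin k => -c (i : ℕ)) := by
  ext i j
  simp only [Matrix.submatrix_apply, schwarzMatrix, Matrix.of_apply, Fin.coe_castSucc]

lemma schwarz_charpoly (c : ℕ → ℝ) :
    ∀ k, (schwarzMatrix (fun i : Fin k => -c (i : ℕ))).charpoly = Pc c k
  | 0 => by
    simp [Matrix.charpoly, Matrix.det_isEmpty, Pc]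
  | 1 => by
    rw [Matrix.charpoly, Matrix.det_fin_one, charmatrix_apply_eq]
    show X - C (schwarzMatrix _ 0 0) = Pc c 1
    have : (schwarzMatrix (fun i : Fin 1 => -c (i : ℕ))) 0 0 = c 0 := by
      simp [schwarzMatrix]
    rw [this]; rfl
  | (k+2) => by
    have ih1 := schwarz_charpoly c (k+1)
    have ih0 := schwarz_charpoly c k
    set M := schwarzMatrix (fun i : Fin (k+2) => -c (i : ℕ)) with hM
    set A := charmatrix M with hA
    -- entries of last row
    have hMentry : ∀ j : Fin (k+2), (j : ℕ) < k → M (Fin.last (k+1)) j = 0 := by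
      intro j hj
      simp only [hM, schwarzMatrix, Matrix.of_apply, Fin.val_last]
      rw [if_neg (by omega), if_neg (by omega), if_neg (by omega)]
    have hAzero : ∀ j : Fin (k+2), (j : ℕ) < k → A (Fin.last (k+1)) j = 0 := by
      intro j hj
      have hne : Fin.last (k+1) ≠ j := by
        intro h; rw [← h, Fin.val_last] at hj; omega
      rw [hA, charmatrix_apply_ne _ _ _ hne, hMentry j hj, map_zero, neg_zero]
    have hAdiag : A (Fin.last (k+1)) (Fin.last (k+1)) = X := by
      rw [hA, charmatrix_apply_eq]
      have : M (Fin.last (k+1)) (Fin.last (k+1)) = 0 := by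
        simp only [hM, schwarzMatrix, Matrix.of_apply, Fin.val_last]
        rw [if_neg (by omega), if_neg (by omega), if_neg (by omega)]
      rw [this, map_zero, sub_zero]
    have hAsub : A (Fin.last (k+1)) (Fin.castSucc (Fin.last k)) = - C (c (k+1)) := by
      have hne : Fin.last (k+1) ≠ Fin.castSucc (Fin.last k) := by
        apply Fin.ne_of_val_ne
        simp only [Fin.val_last, Fin.coe_castSucc]
        omega
      rw [hA, charmatrix_apply_ne _ _ _ hne]
      have hv : ((Fin.castSucc (Fin.last k)) : ℕ) = k := by simp
      have : M (Fin.last (k+1)) (Fin.castSucc (Fin.last k)) = c (k+1) := by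
        simp only [hM, schwarzMatrix, Matrix.of_apply, hv]
        rw [if_neg (by rw [Fin.val_last]; omega), if_neg (by rw [Fin.val_last]; omega),
          if_pos (by rw [Fin.val_last]), Fin.val_last]
        simp
      rw [this]
    have hcol : ∀ i : Fin (k+2), (i : ℕ) < k → A i (Fin.last (k+1)) = 0 := by
      intro i hi
      have hne : i ≠ Fin.last (k+1) := by
        intro h; rw [h, Fin.val_last] at hi; omega
      rw [hA, charmatrix_apply_ne _ _ _ hne]
      have : M i (Fin.last (k+1)) = 0 := by
        simp only [hM, schwarzMatrix, Matrix.of_apply, Fin.val_last]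
        rw [if_neg (by omega), if_neg (by omega), if_neg (by omega)]
      rw [this, map_zero, neg_zero]
    have hAone : A (Fin.castSucc (Fin.last k)) (Fin.last (k+1)) = -1 := by
      have hne : Fin.castSucc (Fin.last k) ≠ Fin.last (k+1) := by
        apply Fin.ne_of_val_ne
        simp only [Fin.val_last, Fin.coe_castSucc]
        omega
      rw [hA, charmatrix_apply_ne _ _ _ hne]
      have hv : ((Fin.castSucc (Fin.last k)) : ℕ) = k := by simp
      have : M (Fin.castSucc (Fin.last k)) (Fin.last (k+1)) = 1 := by
        simp only [hM, schwarzMatrix, Matrix.of_apply]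
        rw [if_neg (by simp only [Fin.val_last, hv]; omega),
          if_pos (by simp only [Fin.val_last, hv])]
      rw [this, Polynomial.C_1]
    -- succAbove facts
    set j0 : Fin (k+2) := Fin.castSucc (Fin.last k) with hj0
    have hsa1 : j0.succAbove (Fin.last k) = Fin.last (k+1) := by
      rw [hj0, Fin.succAbove_of_le_castSucc _ _ (le_refl _)]
      rfl
    have hsa2 : ∀ l : Fin k, j0.succAbove (Fin.castSucc l) = Fin.castSucc (Fin.castSucc l) := by
      intro l
      apply Fin.succAbove_of_castSucc_lt
      rw [hj0]
      apply Fin.lt_def.mpr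
      simp only [Fin.coe_castSucc, Fin.val_last]
      exact l.isLt
    -- the double submatrix determinant
    have hdetsub2 : ((A.submatrix Fin.castSucc Fin.castSucc).submatrix Fin.castSucc Fin.castSucc).det
        = Pc c k := by
      rw [hA, charmatrix_submatrix_castSucc, hM, schwarz_submatrix_s7,
        charmatrix_submatrix_castSucc, schwarz_submatrix_s7]
      exact ih0
    have hdetsub1 : (A.submatrix Fin.castSucc Fin.castSucc).det = Pc c (k+1) := by
      rw [hA, charmatrix_submatrix_castSucc, hM, schwarz_submatrix_s7]
      exact ih1
    -- compute det B
    set B : Matrix (Fin (k+1)) (Fin (k+1)) (Polynomial ℝ)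
      := A.submatrix Fin.castSucc j0.succAbove with hB
    have hdetB : B.det = - Pc c k := by
      rw [Matrix.det_succ_column B (Fin.last k), Fin.sum_univ_castSucc]
      have hz : ∀ i : Fin k,
          (-1 : Polynomial ℝ)^((Fin.castSucc i : ℕ) + (Fin.last k : ℕ))
            * B (Fin.castSucc i) (Fin.last k)
            * ((B.submatrix (Fin.castSucc i).succAbove (Fin.last k).succAbove).det) = 0 := by
        intro i
        have : B (Fin.castSucc i) (Fin.last k) = 0 := by
          rw [hB, Matrix.submatrix_apply, hsa1]
          exact hcol _ (by simp [i.isLt])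
        rw [this, mul_zero, zero_mul]
      rw [Finset.sum_congr rfl (fun i _ => hz i), Finset.sum_const, smul_zero]
      have hBentry : B (Fin.last k) (Fin.last k) = -1 := by
        rw [hB, Matrix.submatrix_apply, hsa1]
        exact hAone
      have hBsub : (B.submatrix (Fin.last k).succAbove (Fin.last k).succAbove).det = Pc c k := by
        rw [Fin.succAbove_last]
        have : B.submatrix Fin.castSucc Fin.castSucc
            = (A.submatrix Fin.castSucc Fin.castSucc).submatrix Fin.castSucc Fin.castSucc := by
          ext m l
          simp only [hB, Matrix.submatrix_apply, hsa2 l]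
        rw [this, hdetsub2]
      rw [hBentry, hBsub]
      simp only [Fin.val_last]
      have : ((-1 : Polynomial ℝ))^(k + k) = 1 := Even.neg_one_pow ⟨k, rfl⟩
      rw [this]
      ring
    -- main expansion
    show A.det = Pc c (k+2)
    rw [Matrix.det_succ_row A (Fin.last (k+1)), Fin.sum_univ_castSucc, Fin.sum_univ_castSucc]
    have hz : ∀ j : Fin k,
        (-1 : Polynomial ℝ)^((Fin.last (k+1) : ℕ) + (Fin.castSucc (Fin.castSucc j) : ℕ))
          * A (Fin.last (k+1)) (Fin.castSucc (Fin.castSucc j))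
          * ((A.submatrix (Fin.last (k+1)).succAbove
              (Fin.castSucc (Fin.castSucc j)).succAbove).det) = 0 := by
      intro j
      have : A (Fin.last (k+1)) (Fin.castSucc (Fin.castSucc j)) = 0 :=
        hAzero _ (by simp [j.isLt])
      rw [this, mul_zero, zero_mul]
    rw [Finset.sum_congr rfl (fun j _ => hz j), Finset.sum_const, smul_zero]
    rw [Fin.succAbove_last]
    have hsub1 : (A.submatrix Fin.castSucc (Fin.castSucc (Fin.last k)).succAbove).det
        = - Pc c k := hdetB
    rw [hsub1, hAsub, hAdiag, hdetsub1]
    have hv : ((Fin.castSucc (Fin.last k)) : ℕ) = k := by simp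
    simp only [Fin.val_last, hv]
    have he : ((-1 : Polynomial ℝ))^((k+1) + (k+1)) = 1 := Even.neg_one_pow ⟨k+1, rfl⟩
    have ho : ((-1 : Polynomial ℝ))^((k+1) + k) = -1 := Odd.neg_one_pow ⟨k, by ring⟩
    rw [he, ho]
    show (0 : Polynomial ℝ) + (-1) * (- C (c (k+1))) * (- Pc c k) + 1 * X * Pc c (k+1)
      = X * Pc c (k+1) - C (c (k+1)) * Pc c k
    ring

def Good (c : ℕ → ℝ) (k : ℕ) (x : ℕ → ℝ) : Prop :=
  (∀ i j, i < j → j < k → x j < x i) ∧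
  (Pc c k = ∏ i ∈ Finset.range k, (X - C (x i))) ∧
  (∀ i, i < k → 0 < (-1 : ℝ)^i * (Pc c (k-1)).eval (x i))

lemma invariant_aux (c : ℕ → ℝ) (hc : ∀ i, 0 < c i) :
    ∀ k, ∃ x, Good c (k+1) x := by
  intro k
  induction k with
  | zero =>
    refine ⟨fun _ => c 0, ?_, ?_, ?_⟩
    · intro i j hij hj; omega
    · rw [Finset.prod_range_one]; rfl
    · intro i hi
      interval_cases i
      simp [Pc]
  | succ k ih =>
    obtain ⟨x, hanti, hfact, hsign⟩ := ih
    simp only [Nat.add_sub_cancel] at hsign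
    have hax : ∀ i j, i ≤ j → j ≤ k → x j ≤ x i := by
      intro i j hij hj
      rcases eq_or_lt_of_le hij with h | h
      · rw [h]
      · exact (hanti i j h (by omega)).le
    obtain ⟨hm2, hd2⟩ := Pc_monic_natDegree c (k+2)
    have hrec : Pc c (k+2) = X * Pc c (k+1) - C (c (k+1)) * Pc c k := by rw [Pc]
    set f : ℝ → ℝ := fun t => (Pc c (k+2)).eval t with hf
    have hroot1 : ∀ i, i ≤ k → (Pc c (k+1)).eval (x i) = 0 := by
      intro i hi
      rw [hfact, eval_prod]
      apply Finset.prod_eq_zero (Finset.mem_range.mpr (by omega : i < k+1))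
      simp
    have hs : ∀ i, i ≤ k → 0 < (-1 : ℝ)^(i+1) * f (x i) := by
      intro i hi
      have hE := hsign i (by omega)
      have hev : f (x i) = -(c (k+1)) * (Pc c k).eval (x i) := by
        rw [hf]
        simp only [hrec, eval_sub, eval_mul, eval_X, eval_C, hroot1 i hi]
        ring
      rw [hev, show (-1 : ℝ)^(i+1) * (-(c (k+1)) * (Pc c k).eval (x i))
        = c (k+1) * ((-1 : ℝ)^i * (Pc c k).eval (x i)) by rw [pow_succ]; ring]
      exact mul_pos (hc _) hE
    have hdegpos : 0 < (Pc c (k+2)).degree := by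
      rw [← natDegree_pos_iff_degree_pos, hd2]; omega
    obtain ⟨M, hMgt, hMpos⟩ : ∃ M, x 0 < M ∧ 0 < f M := by
      have ht := (Pc c (k+2)).tendsto_atTop_of_leadingCoeff_nonneg hdegpos
        (by rw [hm2.leadingCoeff]; norm_num)
      obtain ⟨M, h1, h2⟩ := ((ht.eventually_gt_atTop 0).and
        (Filter.eventually_gt_atTop (x 0))).exists
      exact ⟨M, h2, h1⟩
    obtain ⟨m', hm'lt, hm'sign⟩ : ∃ m', m' < x k ∧ 0 < (-1 : ℝ)^k * f m' := by
      have hnz : ((-1:ℝ)^k) ≠ 0 := pow_ne_zero _ (by norm_num)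
      set R : Polynomial ℝ := C ((-1 : ℝ)^k) * ((Pc c (k+2)).comp (-X)) with hR
      have hqnd : (-X : Polynomial ℝ).natDegree = 1 := by
        rw [natDegree_neg, natDegree_X]
      have hndc : ((Pc c (k+2)).comp (-X)).natDegree = k+2 := by
        rw [natDegree_comp, hd2, hqnd, mul_one]
      have hRnd : R.natDegree = k+2 := by rw [hR, natDegree_C_mul hnz, hndc]
      have hRdeg : 0 < R.degree := by rw [← natDegree_pos_iff_degree_pos, hRnd]; omega
      have hRlc : R.leadingCoeff = 1 := by
        rw [hR, leadingCoeff_mul, leadingCoeff_C,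
          leadingCoeff_comp (by rw [hqnd]; omega), hm2.leadingCoeff, hd2, one_mul]
        rw [show (-X : Polynomial ℝ).leadingCoeff = -1 by
          rw [leadingCoeff_neg, leadingCoeff_X]]
        rw [← pow_add]
        exact Even.neg_one_pow ⟨k+1, by ring⟩
      have ht := R.tendsto_atTop_of_leadingCoeff_nonneg hRdeg (by rw [hRlc]; norm_num)
      obtain ⟨t0, h1, h2⟩ := ((ht.eventually_gt_atTop 0).and
        (Filter.eventually_gt_atTop (-(x k)))).exists
      refine ⟨-t0, by linarith, ?_⟩
      have : R.eval t0 = (-1 : ℝ)^k * f (-t0) := by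
        rw [hR, eval_mul, eval_C, eval_comp, eval_neg, eval_X, hf]
      rw [← this]; exact h1
    set a : ℕ → ℝ := fun j => if j ≤ k then x j else m' with ha
    set b : ℕ → ℝ := fun j => if j = 0 then M else x (j-1) with hb
    have hab : ∀ j, j ≤ k+1 → a j < b j := by
      intro j hj
      simp only [ha, hb]
      rcases Nat.eq_zero_or_pos j with h0 | hpos
      · subst h0; simp only [if_pos (by omega : (0:ℕ) ≤ k), if_pos rfl]; exact hMgt
      · rcases Nat.lt_or_ge j (k+1) with hlt | hge
        · rw [if_pos (by omega), if_neg (by omega)]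
          exact hanti (j-1) j (by omega) (by omega)
        · have : j = k+1 := by omega
          subst this
          rw [if_neg (by omega), if_neg (by omega)]
          simpa using hm'lt
    have hsa : ∀ j, j ≤ k+1 → 0 < (-1 : ℝ)^(j+1) * f (a j) := by
      intro j hj
      rcases Nat.lt_or_ge j (k+1) with hlt | hge
      · simp only [ha]; rw [if_pos (by omega : j ≤ k)]
        exact hs j (by omega)
      · have : j = k+1 := by omega
        subst this
        simp only [ha]; rw [if_neg (by omega : ¬ (k+1 ≤ k))]
        rw [show (-1:ℝ)^(k+1+1) = (-1)^k by
          rw [pow_succ, pow_succ]; ring]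
        exact hm'sign
    have hsb : ∀ j, j ≤ k+1 → 0 < (-1 : ℝ)^j * f (b j) := by
      intro j hj
      rcases Nat.eq_zero_or_pos j with h0 | hpos
      · subst h0; simp only [hb]; simpa using hMpos
      · simp only [hb]; rw [if_neg (by omega : ¬ j = 0)]
        have := hs (j-1) (by omega)
        rw [show j-1+1 = j by omega] at this
        exact this
    have hiv : ∀ j, j ≤ k+1 → ∃ t, a j < t ∧ t < b j ∧ f t = 0 := by
      intro j hj
      have hcont : ContinuousOn f (Set.Icc (a j) (b j)) :=
        ((Pc c (k+2)).continuous_aeval).continuousOn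
      rcases Nat.even_or_odd j with he | ho
      · have hfa : f (a j) < 0 := by
          have h1 := hsa j hj
          rw [(he.add_one).neg_one_pow] at h1; linarith
        have hfb : 0 < f (b j) := by
          have h1 := hsb j hj
          rw [he.neg_one_pow] at h1; linarith
        obtain ⟨t, ht, hft⟩ := intermediate_value_Ioo (hab j hj).le hcont ⟨hfa, hfb⟩
        exact ⟨t, ht.1, ht.2, hft⟩
      · have hfa : 0 < f (a j) := by
          have h1 := hsa j hj
          rw [(Even.neg_one_pow (by simpa using ho.add_one))] at h1; linarith
        have hfb : f (b j) < 0 := by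
          have h1 := hsb j hj
          rw [ho.neg_one_pow] at h1; linarith
        obtain ⟨t, ht, hft⟩ := intermediate_value_Ioo' (hab j hj).le hcont ⟨hfb, hfa⟩
        exact ⟨t, ht.1, ht.2, hft⟩
    have hchoice : ∀ j, ∃ t, (j ≤ k+1) → (a j < t ∧ t < b j ∧ f t = 0) := by
      intro j
      rcases Nat.lt_or_ge j (k+2) with h | h
      · obtain ⟨t, ht⟩ := hiv j (by omega)
        exact ⟨t, fun _ => ht⟩
      · exact ⟨0, fun hh => absurd hh (by omega)⟩
    set xi : ℕ → ℝ := fun j => (hchoice j).choose with hxi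
    have hxi_spec : ∀ j, j ≤ k+1 → a j < xi j ∧ xi j < b j ∧ f (xi j) = 0 :=
      fun j h => (hchoice j).choose_spec h
    have hxib : ∀ j, 1 ≤ j → j ≤ k+1 → xi j < x (j-1) := by
      intro j h1 h2
      have := (hxi_spec j h2).2.1
      simp only [hb] at this
      simpa [if_neg (by omega : ¬ j = 0)] using this
    have hxia : ∀ j, j ≤ k → x j < xi j := by
      intro j h
      have := (hxi_spec j (by omega)).1
      simp only [ha] at this
      simpa [if_pos h] using this
    have anti : ∀ i j, i < j → j < k+2 → xi j < xi i := by
      intro i j hij hj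
      have hi : i ≤ k := by omega
      calc xi j < x (j-1) := hxib j (by omega) (by omega)
        _ ≤ x i := hax i (j-1) (by omega) (by omega)
        _ < xi i := hxia i hi
    have hfact2 : Pc c (k+2) = ∏ i ∈ Finset.range (k+2), (X - C (xi i)) := by
      apply monic_eq_prod_of_roots (k+2) _ hm2 hd2
      · intro i j hi hj hij
        rcases Nat.lt_or_ge i j with h | h
        · exact ne_of_gt (anti i j h hj)
        · have h' : j < i := by omega
          exact (ne_of_gt (anti j i h' hi)).symm
      · intro i hi
        exact (hxi_spec i (by omega)).2.2
    refine ⟨xi, anti, hfact2, ?_⟩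
    intro j hj
    have heval : (Pc c (k+2-1)).eval (xi j)
        = ∏ i ∈ Finset.range (k+1), (xi j - x i) := by
      rw [show k+2-1 = k+1 from rfl, hfact, eval_prod]
      apply Finset.prod_congr rfl
      intro i _
      simp
    rw [heval]
    apply sign_prod_split _ (k+1) j (by omega)
    · intro i hilt
      have h1 : xi j < x (j-1) := hxib j (by omega) (by omega)
      have h2 : x (j-1) ≤ x i := hax i (j-1) (by omega) (by omega)
      linarith
    · intro i hge hilt
      have hjk : j ≤ k := by omega
      have h1 : x j < xi j := hxia j hjk
      have h2 : x i ≤ x j := hax j i hge (by omega)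
      linarith

/-- if all parameters of the Schwarz matrix are negative, then its
eigenvalues are real and simple and, suitably ordered, satisfy
`λ₁ > -λ₂ > λ₃ > ⋯ > (-1)^{n-1} λ_n > 0`. -/
theorem schwarz_stmt7 {n : ℕ} (b : Fin n → ℝ) (hb : ∀ i, b i < 0) :
    ∃ lam : Fin n → ℝ,
      (schwarzMatrix b).charpoly = ∏ i, (Polynomial.X - Polynomial.C (lam i)) ∧
      StrictAnti (fun i : Fin n => (-1 : ℝ) ^ (i : ℕ) * lam i) ∧
      ∀ i : Fin n, 0 < (-1 : ℝ) ^ (i : ℕ) * lam i := by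
  cases n with
  | zero =>
    refine ⟨Fin.elim0, ?_, ?_, ?_⟩
    · rw [Matrix.charpoly]
      simp [Matrix.det_isEmpty]
    · intro a b hab; exact a.elim0
    · intro i; exact i.elim0
  | succ m =>
    set c : ℕ → ℝ := fun i => if h : i < m + 1 then -(b ⟨i, h⟩) else 1 with hcdef
    have hc : ∀ i, 0 < c i := by
      intro i
      simp only [hcdef]
      split
      · rename_i h; have := hb ⟨i, h⟩; linarith
      · norm_num
    have hbc : b = fun i : Fin (m+1) => -c (i : ℕ) := by
      funext i
      simp only [hcdef, dif_pos i.isLt, neg_neg]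
    have hchar : (schwarzMatrix b).charpoly = Pc c (m+1) := by
      rw [hbc]; exact schwarz_charpoly c (m+1)
    obtain ⟨x, hanti, hfact, hsign⟩ := invariant_aux c hc m
    simp only [Nat.add_sub_cancel] at hsign
    have hax : ∀ i j, i ≤ j → j ≤ m → x j ≤ x i := by
      intro i j hij hj
      rcases eq_or_lt_of_le hij with h | h
      · rw [h]
      · exact (hanti i j h (by omega)).le
    have hroot : ∀ i, i ≤ m → (Pc c (m+1)).eval (x i) = 0 := by
      intro i hi
      rw [hfact, eval_prod]
      apply Finset.prod_eq_zero (Finset.mem_range.mpr (by omega : i < m+1))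
      simp
    -- W-sign from the Casoratian
    have hγpos : 0 < ∏ i ∈ Finset.Icc 1 m, c i :=
      Finset.prod_pos (fun i _ => hc i)
    have hW : ∀ j, j ≤ m → 0 < (-1 : ℝ)^j * (Wc c (m+1)).eval (x j) := by
      intro j hj
      have hcas := congrArg (eval (x j)) (Pc_casoratian c m)
      simp only [eval_sub, eval_mul, eval_C] at hcas
      rw [hroot j hj, zero_mul, sub_zero] at hcas
      have hE := hsign j (by omega)
      rcases Nat.even_or_odd j with he | ho
      · rw [he.neg_one_pow] at hE ⊢
        rw [one_mul] at hE ⊢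
        nlinarith
      · rw [ho.neg_one_pow] at hE ⊢
        nlinarith
    -- product of pair sums via the reflection identity
    have hSval : ∀ j, j ≤ m →
        ∏ i ∈ Finset.range (m+1), (x j + x i) = 2 * c 0 * (Wc c (m+1)).eval (x j) := by
      intro j hj
      have h0 := congrArg (eval (x j)) (Pc_reflect c (m+1))
      simp only [eval_add, eval_mul, eval_pow, eval_neg, eval_one, eval_comp,
        eval_X, eval_C] at h0
      rw [hroot j hj, zero_add] at h0
      have h1 : (Pc c (m+1)).eval (-(x j)) = ∏ i ∈ Finset.range (m+1), (-(x j) - x i) := by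
        rw [hfact, eval_prod]
        apply Finset.prod_congr rfl
        intro i _; simp
      have h2 : ∏ i ∈ Finset.range (m+1), (-(x j) - x i)
          = (-1 : ℝ)^(m+1) * ∏ i ∈ Finset.range (m+1), (x j + x i) := by
        rw [show (∏ i ∈ Finset.range (m+1), (-(x j) - x i))
            = ∏ i ∈ Finset.range (m+1), ((-1) * (x j + x i)) by
          apply Finset.prod_congr rfl; intros; ring]
        rw [Finset.prod_mul_distrib, Finset.prod_const, Finset.card_range]
      rw [h1, h2, ← mul_assoc, ← pow_add] at h0
      rw [Even.neg_one_pow ⟨m+1, by ring⟩, one_mul] at h0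
      exact h0
    have hSsign : ∀ j, j ≤ m →
        0 < (-1 : ℝ)^j * ∏ i ∈ Finset.range (m+1), (x j + x i) := by
      intro j hj
      rw [hSval j hj, show (-1 : ℝ)^j * (2 * c 0 * (Wc c (m+1)).eval (x j))
        = 2 * c 0 * ((-1 : ℝ)^j * (Wc c (m+1)).eval (x j)) by ring]
      have := hc 0
      have := hW j hj
      positivity
    have hfacne : ∀ j i, j ≤ m → i ≤ m → x j + x i ≠ 0 := by
      intro j i hj hi
      have hSne : ∏ i ∈ Finset.range (m+1), (x j + x i) ≠ 0 := by
        have := hSsign j hj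
        intro h; rw [h, mul_zero] at this; exact lt_irrefl 0 this
      exact Finset.prod_ne_zero_iff.mp hSne i (Finset.mem_range.mpr (by omega))
    -- the counting function
    set N : ℕ → ℕ := fun j =>
      ((Finset.range (m+1)).filter (fun i => x j + x i < 0)).card with hN
    have hparity : ∀ j, j ≤ m → N j % 2 = j % 2 := by
      intro j hj
      have h1 := sign_prod_filter (fun i => x j + x i) (Finset.range (m+1))
        (fun i hi => hfacne j i hj (by simpa [Finset.mem_range] using Nat.lt_succ_iff.mp (Finset.mem_range.mp hi)))
      exact parity_of_signs h1 (hSsign j hj)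
    have hmono : ∀ j j', j ≤ j' → j' ≤ m → N j ≤ N j' := by
      intro j j' hjj hj'
      apply Finset.card_le_card
      intro i hi
      simp only [Finset.mem_filter, Finset.mem_range] at hi ⊢
      refine ⟨hi.1, ?_⟩
      have := hax j j' hjj hj'
      linarith [hi.2]
    have hNle : ∀ j, N j ≤ m + 1 := by
      intro j
      calc N j ≤ (Finset.range (m+1)).card := Finset.card_filter_le _ _
        _ = m + 1 := Finset.card_range (m+1)
    have hupper : ∀ j, j ≤ m → N j ≤ j := by
      have key : ∀ t, t ≤ m → N (m - t) ≤ m - t := by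
        intro t
        induction t with
        | zero =>
          intro _
          have h1 := hNle m
          have h2 := hparity m (le_refl m)
          simp only [Nat.sub_zero]
          omega
        | succ t iht =>
          intro ht
          have h1 := iht (by omega)
          have h2 := hmono (m - (t+1)) (m - t) (by omega) (by omega)
          have h3 := hparity (m - (t+1)) (by omega)
          omega
      intro j hj
      have := key (m - j) (by omega)
      rw [show m - (m - j) = j by omega] at this
      exact this
    have hlower : ∀ j, j ≤ m → j ≤ N j := by
      intro j
      induction j with
      | zero => intro _; omega
      | succ j ihj =>
        intro hj
        have h1 := ihj (by omega)
        have h2 := hmono j (j+1) (by omega) hj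
        have h3 := hparity (j+1) hj
        have h4 := hparity j (by omega)
        omega
    have hNeq : ∀ j, j ≤ m → N j = j := fun j hj =>
      le_antisymm (hupper j hj) (hlower j hj)
    -- chain inequalities
    have chainA : ∀ j, j ≤ m → 0 < x j + x (m - j) := by
      intro j hj
      rcases lt_trichotomy (x j + x (m - j)) 0 with h | h | h
      · exfalso
        have hcard : j + 1 ≤ N j := by
          rw [hN]
          calc j + 1 = (Finset.range (j+1)).card := (Finset.card_range _).symm
            _ ≤ _ := by
              apply Finset.card_le_card_of_injOn (fun t => m - j + t)
              · intro t ht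
                simp only [Finset.mem_coe, Finset.mem_range] at ht
                simp only [Finset.mem_coe, Finset.mem_filter, Finset.mem_range]
                constructor
                · omega
                · have hle : x (m - j + t) ≤ x (m - j) := hax (m - j) (m - j + t) (by omega) (by omega)
                  linarith
              · intro a _ b _ hab
                dsimp only at hab
                omega
        have := hNeq j hj
        omega
      · exact absurd h (hfacne j (m - j) hj (by omega))
      · exact h
    have chainB : ∀ j, j + 1 ≤ m → x (j+1) + x (m - j) < 0 := by
      intro j hj
      rcases lt_trichotomy (x (j+1) + x (m - j)) 0 with h | h | h
      · exact h
      · exact absurd h (hfacne (j+1) (m - j) hj (by omega))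
      · exfalso
        have hcard : N (j+1) ≤ j := by
          rw [hN]
          calc ((Finset.range (m+1)).filter (fun i => x (j+1) + x i < 0)).card
              ≤ (Finset.range j).card := by
                apply Finset.card_le_card_of_injOn (fun i => i - (m - j + 1))
                · intro i hi
                  simp only [Finset.mem_coe, Finset.mem_filter, Finset.mem_range] at hi
                  simp only [Finset.mem_coe, Finset.mem_range]
                  have hige : m - j + 1 ≤ i := by
                    by_contra hcon
                    push_neg at hcon
                    have hle : x (m - j) ≤ x i := hax i (m - j) (by omega) (by omega)
                    linarith [hi.2]
                  omega
                · intro a ha b hb hab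
                  simp only [Finset.mem_coe, Finset.mem_filter, Finset.mem_range] at ha hb
                  have hage : m - j + 1 ≤ a := by
                    by_contra hcon
                    push_neg at hcon
                    have hle : x (m - j) ≤ x a := hax a (m - j) (by omega) (by omega)
                    linarith [ha.2]
                  have hbge : m - j + 1 ≤ b := by
                    by_contra hcon
                    push_neg at hcon
                    have hle : x (m - j) ≤ x b := hax b (m - j) (by omega) (by omega)
                    linarith [hb.2]
                  dsimp only at hab
                  omega
            _ = j := Finset.card_range j
        have := hNeq (j+1) hj
        omega
    -- the permutation
    set σ : Fin (m+1) → Fin (m+1) := fun i =>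
      if (i : ℕ) % 2 = 0 then ⟨(i : ℕ)/2, by omega⟩ else ⟨m - (i : ℕ)/2, by omega⟩
      with hσ
    have hσval : ∀ i : Fin (m+1), ((σ i : Fin (m+1)) : ℕ)
        = if (i : ℕ) % 2 = 0 then (i : ℕ)/2 else m - (i : ℕ)/2 := by
      intro i
      simp only [hσ]
      by_cases h : (i : ℕ) % 2 = 0 <;> simp [h]
    have hσinj : Function.Injective σ := by
      intro i j hij
      have hvi := hσval i
      have hvj := hσval j
      rw [hij] at hvi
      have hi2 : (i : ℕ) < m + 1 := i.isLt
      have hj2 : (j : ℕ) < m + 1 := j.isLt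
      apply Fin.ext
      rcases Nat.eq_zero_or_pos ((i:ℕ) % 2) with hpi | hpi <;>
        rcases Nat.eq_zero_or_pos ((j:ℕ) % 2) with hpj | hpj
      · rw [if_pos hpi] at hvi; rw [if_pos hpj] at hvj; omega
      · rw [if_pos hpi] at hvi; rw [if_neg (by omega)] at hvj; omega
      · rw [if_neg (by omega)] at hvi; rw [if_pos hpj] at hvj; omega
      · rw [if_neg (by omega)] at hvi; rw [if_neg (by omega)] at hvj; omega
    have hσbij : Function.Bijective σ := Finite.injective_iff_bijective.mp hσinj
    have hanti2 : StrictAnti (fun i : Fin (m+1) => (-1:ℝ)^(i:ℕ) * x ((σ i : Fin (m+1)) : ℕ)) := by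
      rw [Fin.strictAnti_iff_succ_lt]
      intro i
      have ht : (i : ℕ) < m := i.isLt
      have hv1 := hσval i.castSucc
      have hv2 := hσval i.succ
      simp only [Fin.coe_castSucc, Fin.val_succ] at hv1 hv2
      simp only [Fin.coe_castSucc, Fin.val_succ]
      rw [hv1, hv2]
      rcases Nat.eq_zero_or_pos ((i : ℕ) % 2) with hp | hp
      · rw [if_neg (show ¬(((i:ℕ) + 1) % 2 = 0) by omega), if_pos hp]
        have he : Even (i : ℕ) := Nat.even_iff.mpr hp
        rw [he.neg_one_pow, (he.add_one).neg_one_pow]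
        have hA := chainA ((i:ℕ)/2) (by omega)
        have hq : m - ((i:ℕ)+1)/2 = m - (i:ℕ)/2 := by omega
        rw [hq]
        linarith
      · rw [if_pos (show (((i:ℕ) + 1) % 2 = 0) by omega),
          if_neg (show ¬((i:ℕ) % 2 = 0) by omega)]
        have ho : Odd (i : ℕ) := Nat.odd_iff.mpr (by omega)
        rw [ho.neg_one_pow, (Odd.add_one ho).neg_one_pow]
        have hq : ((i:ℕ)+1)/2 = (i:ℕ)/2 + 1 := by omega
        rw [hq]
        have hB := chainB ((i:ℕ)/2) (by omega)
        linarith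
    have hlast : 0 < (-1:ℝ)^((Fin.last m : Fin (m+1)) : ℕ)
        * x ((σ (Fin.last m) : Fin (m+1)) : ℕ) := by
      have hv := hσval (Fin.last m)
      simp only [Fin.val_last] at hv ⊢
      rw [hv]
      rcases Nat.eq_zero_or_pos (m % 2) with hp | hp
      · rw [if_pos hp]
        have he : Even m := Nat.even_iff.mpr hp
        rw [he.neg_one_pow, one_mul]
        have hA := chainA (m/2) (by omega)
        have hq : m - m/2 = m/2 := by omega
        rw [hq] at hA
        linarith
      · rw [if_neg (by omega)]
        have ho : Odd m := Nat.odd_iff.mpr (by omega)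
        rw [ho.neg_one_pow]
        have hB := chainB (m/2) (by omega)
        have hq : m - m/2 = m/2 + 1 := by omega
        rw [hq] at hB ⊢
        linarith
    refine ⟨fun i => x ((σ i : Fin (m+1)) : ℕ), ?_, hanti2, ?_⟩
    · rw [hchar, hfact, ← Fin.prod_univ_eq_prod_range (fun i => X - C (x i)) (m+1)]
      exact (Fintype.prod_bijective σ hσbij _ _ (fun i => rfl)).symm
    · intro i
      rcases eq_or_lt_of_le (Fin.le_last i) with h | h
      · rw [h]; exact hlast
      · have h2 := hanti2 h
        dsimp only at h2
        exact lt_trans hlast h2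
end

section
/- A real monic polynomial p(z) = p_0(z²) + z·p_1(z²) of degree n is self-interlacing of type I (its roots λ_1, ..., λ_n are real and simple with 0 < λ_1 < -λ_2 < λ_3 < ⋯ < (-1)^{n-1}λ_n) if and only if the polynomial q(z) = p_0(-z²) - z·p_1(-z²) has all its roots in the open left half-plane. -/
open Polynomial Matrix Complex

lemma multiset_enum {α : Type*} : ∀ (n : ℕ) (s : Multiset α), Multiset.card s = n →
    ∃ f : Fin n → α, s = Multiset.map f Finset.univ.val := by
  intro n
  induction n with
  | zero => intro s hs; exact ⟨Fin.elim0, by simp [Multiset.card_eq_zero.mp hs]⟩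
  | succ m ih =>
    intro s hs
    obtain ⟨x, hx⟩ : ∃ x, x ∈ s := Multiset.card_pos_iff_exists_mem.mp (by omega)
    obtain ⟨t, rfl⟩ := Multiset.exists_cons_of_mem hx
    obtain ⟨g, hg⟩ := ih t (by simpa using hs)
    refine ⟨Fin.cons x g, ?_⟩
    rw [Fin.univ_succ, Finset.cons_val, Multiset.map_cons, Fin.cons_zero, Finset.map_val,
      Multiset.map_map, hg]
    congr 1

lemma prod_neg_sign {ι : Type*} (S : Finset ι) (f : ι → ℝ) (hf : ∀ j ∈ S, f j < 0) :
    0 < (-1 : ℝ) ^ S.card * ∏ j ∈ S, f j := by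
  have h1 : ∏ j ∈ S, f j = (-1 : ℝ) ^ S.card * ∏ j ∈ S, (-(f j)) := by
    rw [← Finset.prod_const (-1 : ℝ), ← Finset.prod_mul_distrib]
    simp
  rw [h1, ← mul_assoc, ← pow_add]
  have hp : 0 < ∏ j ∈ S, (-(f j)) := Finset.prod_pos (fun j hj => by linarith [hf j hj])
  have h2 : (-1 : ℝ) ^ (S.card + S.card) = 1 := Even.neg_one_pow ⟨S.card, rfl⟩
  rw [h2]; simpa

lemma erase_eq_Iio_union_Ioi {n : ℕ} (k : Fin n) :
    Finset.univ.erase k = Finset.Iio k ∪ Finset.Ioi k := by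
  ext j
  simp [Finset.mem_erase, Finset.mem_Iio, Finset.mem_Ioi, ← ne_iff_lt_or_gt, ne_comm]

lemma cos_sub_sin_eq_zero (k : ℤ) :
    Real.cos (Real.pi/4 + k * Real.pi) - Real.sin (Real.pi/4 + k * Real.pi) = 0 := by
  rw [Real.cos_add, Real.sin_add, Real.sin_int_mul_pi, Real.cos_pi_div_four,
    Real.sin_pi_div_four]
  ring

lemma polar_decomp (a b : ℝ) (ha : 0 < a) :
    (a : ℂ) + b * I = (Real.sqrt (a^2+b^2) : ℂ) * Complex.exp ((Real.arctan (b/a) : ℂ) * I) := by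
  have hpos : (0:ℝ) < Real.sqrt (a^2+b^2) := Real.sqrt_pos.mpr (by positivity)
  have hsq : Real.sqrt (1 + (b/a)^2) = Real.sqrt (a^2 + b^2) / a := by
    rw [eq_div_iff ha.ne', ← Real.sqrt_sq ha.le, ← Real.sqrt_mul (by positivity)]
    congr 1
    field_simp
    rw [Real.sq_sqrt (sq_nonneg a)]
  have h1 : 1/Real.sqrt (1+(b/a)^2) = a / Real.sqrt (a^2+b^2) := by
    rw [hsq, one_div_div]
  have h2 : (b/a)/Real.sqrt (1+(b/a)^2) = b / Real.sqrt (a^2+b^2) := by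
    rw [hsq]
    field_simp
  rw [Complex.exp_mul_I, ← Complex.ofReal_cos, ← Complex.ofReal_sin,
    Real.cos_arctan, Real.sin_arctan, h1, h2]
  have hpc : (Real.sqrt (a^2+b^2) : ℂ) ≠ 0 := by exact_mod_cast hpos.ne'
  push_cast
  field_simp

set_option maxHeartbeats 2000000 in
/-- a real monic polynomial `p(z) = p₀(z²) + z·p₁(z²)` of degree `n` is
self-interlacing of type I iff `q(z) = p₀(-z²) - z·p₁(-z²)` is Hurwitz stable. -/
theorem schwarz_stmt9 {n : ℕ} (hn : 0 < n) (p p0 p1 : Polynomial ℝ) (hm : p.Monic)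
    (hdeg : p.natDegree = n)
    (hp : p = p0.comp (Polynomial.X ^ 2) + Polynomial.X * p1.comp (Polynomial.X ^ 2)) :
    (∃ lam : Fin n → ℝ,
        p = ∏ i, (Polynomial.X - Polynomial.C (lam i)) ∧
        StrictMono (fun i : Fin n => (-1 : ℝ) ^ (i : ℕ) * lam i) ∧
        ∀ i : Fin n, 0 < (-1 : ℝ) ^ (i : ℕ) * lam i) ↔
      ∀ z ∈ cRoots (p0.comp (-(Polynomial.X ^ 2)) -
          Polynomial.X * p1.comp (-(Polynomial.X ^ 2))), z.re < 0 := by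
  classical
  set q' : Polynomial ℝ := p0.comp (-(Polynomial.X ^ 2)) -
      Polynomial.X * p1.comp (-(Polynomial.X ^ 2)) with hq'
  set P : Polynomial ℂ := p.map (algebraMap ℝ ℂ) with hPdef
  set Q : Polynomial ℂ := q'.map (algebraMap ℝ ℂ) with hQdef
  have hcR : cRoots q' = Q.roots := rfl
  -- evaluation identities
  have evalP : ∀ w : ℂ, P.eval w =
      (p0.map (algebraMap ℝ ℂ)).eval (w^2) + w * (p1.map (algebraMap ℝ ℂ)).eval (w^2) := by
    intro w
    rw [hPdef, hp]
    simp [Polynomial.map_add, Polynomial.map_mul, Polynomial.map_comp, Polynomial.map_pow,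
      eval_comp]
  have evalQ : ∀ w : ℂ, Q.eval w =
      (p0.map (algebraMap ℝ ℂ)).eval (-(w^2)) - w * (p1.map (algebraMap ℝ ℂ)).eval (-(w^2)) := by
    intro w
    rw [hQdef, hq']
    simp [Polynomial.map_sub, Polynomial.map_mul, Polynomial.map_comp, Polynomial.map_neg,
      Polynomial.map_pow, eval_comp]
  have hIz2 : ∀ z : ℂ, (I*z)^2 = -(z^2) := by
    intro z
    linear_combination (z^2) * Complex.I_sq
  have hQPe : ∀ z : ℂ, Q.eval z =
      (1+I)/2 * P.eval (I*z) + (1-I)/2 * P.eval (-(I*z)) := by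
    intro z
    rw [evalQ z, evalP (I*z), evalP (-(I*z)), show (-(I*z))^2 = (I*z)^2 by ring, hIz2 z]
    linear_combination (-(z * (p1.map (algebraMap ℝ ℂ)).eval (-(z^2)))) * Complex.I_sq
  have hPQe : ∀ z : ℂ, P.eval z =
      (1+I)/2 * Q.eval (I*z) + (1-I)/2 * Q.eval (-(I*z)) := by
    intro z
    rw [evalP z, evalQ (I*z), evalQ (-(I*z)), show (-(I*z))^2 = (I*z)^2 by ring, hIz2 z, neg_neg]
    linear_combination (z * (p1.map (algebraMap ℝ ℂ)).eval (z^2)) * Complex.I_sq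
  have evalPreal : ∀ t : ℝ, P.eval (t:ℂ) = ((p.eval t : ℝ) : ℂ) := by
    intro t
    rw [hPdef, Polynomial.eval_map]
    exact Polynomial.eval₂_at_apply _ t
  have hPmonic : P.Monic := hm.map _
  have hPne : P ≠ 0 := hPmonic.ne_zero
  have hPdeg : P.natDegree = n := by
    rw [hPdef, Polynomial.natDegree_map_eq_of_injective (algebraMap ℝ ℂ).injective, hdeg]
  -- polynomial identity for Q
  have hQP : Q = Polynomial.C ((1+I)/2) * P.comp (Polynomial.C I * Polynomial.X)
      + Polynomial.C ((1-I)/2) * P.comp (Polynomial.C (-I) * Polynomial.X) := by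
    apply Polynomial.funext
    intro z
    simp only [eval_add, eval_mul, eval_C, eval_comp, eval_X, neg_mul]
    rw [hQPe z]
  have hIne : (I:ℂ) ≠ 0 := I_ne_zero
  have hnIne : (-I:ℂ) ≠ 0 := neg_ne_zero.mpr I_ne_zero
  have hcompdeg : ∀ c : ℂ, c ≠ 0 → (P.comp (Polynomial.C c * Polynomial.X)).natDegree = n := by
    intro c hc
    rw [natDegree_comp, natDegree_C_mul_X _ hc, hPdeg, mul_one]
  have hcomplead : ∀ c : ℂ, c ≠ 0 →
      (P.comp (Polynomial.C c * Polynomial.X)).coeff n = c ^ n := by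
    intro c hc
    have hd := hcompdeg c hc
    conv_lhs => rw [← hd]
    rw [Polynomial.coeff_natDegree,
      leadingCoeff_comp (by rw [natDegree_C_mul_X _ hc]; norm_num), hPmonic.leadingCoeff, hPdeg]
    rw [leadingCoeff_mul, leadingCoeff_C, leadingCoeff_X, mul_one, one_mul]
  have hQcoeffn : Q.coeff n = I^n * ((1+I)/2 + (-1:ℂ)^n * ((1-I)/2)) := by
    rw [hQP, Polynomial.coeff_add, Polynomial.coeff_C_mul, Polynomial.coeff_C_mul,
      hcomplead I hIne, hcomplead (-I) hnIne, show ((-I:ℂ))^n = (-1)^n * I^n by rw [← neg_one_mul, mul_pow]]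
    ring
  have hQcne : Q.coeff n ≠ 0 := by
    rw [hQcoeffn]
    apply mul_ne_zero (pow_ne_zero _ hIne)
    rcases Nat.even_or_odd n with he | ho
    · rw [he.neg_one_pow]
      intro h
      exact one_ne_zero (by linear_combination h : (1:ℂ) = 0)
    · rw [ho.neg_one_pow]
      intro h
      exact hIne (by linear_combination h)
  have hQdeg : Q.natDegree = n := by
    apply le_antisymm
    · rw [hQP]
      apply le_trans (natDegree_add_le _ _)
      rw [max_le_iff]
      constructor
      · exact le_trans (natDegree_C_mul_le _ _) (le_of_eq (hcompdeg I hIne))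
      · exact le_trans (natDegree_C_mul_le _ _) (le_of_eq (hcompdeg (-I) hnIne))
    · exact le_natDegree_of_ne_zero hQcne
  have hQne : Q ≠ 0 := fun h => hQcne (by simp [h])
  have hcrQ : Q.leadingCoeff = ((q'.coeff n : ℝ) : ℂ) := by
    rw [← Polynomial.coeff_natDegree, hQdeg, hQdef, Polynomial.coeff_map]
    rfl
  have hcrne : q'.coeff n ≠ 0 := by
    intro h
    apply hQcne
    rw [hQdef, Polynomial.coeff_map, h]
    simp
  -- conjugation
  have hQmapconj : Q.map (starRingEnd ℂ) = Q := by
    rw [hQdef, Polynomial.map_map]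
    congr 1
    exact RingHom.ext fun r => Complex.conj_ofReal r
  have hsplitsQ : Q.Splits := IsAlgClosed.splits Q
  have hrootsconj : Q.roots.map (starRingEnd ℂ) = Q.roots := by
    conv_rhs => rw [← hQmapconj]
    exact (hsplitsQ.roots_map (starRingEnd ℂ)).symm
  have hQconjeval : ∀ z : ℂ, Q.eval ((starRingEnd ℂ) z) = (starRingEnd ℂ) (Q.eval z) := by
    intro z
    rw [hQdef, Polynomial.eval_map, Polynomial.eval_map, Polynomial.hom_eval₂]
    congr 1
    exact RingHom.ext fun r => (Complex.conj_ofReal r).symm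
  constructor
  · -- forward direction: SI ⟹ Hurwitz
    rintro ⟨lam, hfact, hmono, hpos⟩ z hz
    have hpne : p ≠ 0 := hm.ne_zero
    have hzr : Q.eval z = 0 := by
      rw [hcR] at hz
      exact (Polynomial.mem_roots'.mp hz).2
    have hsq1 : ∀ i : Fin n, ((-1:ℝ)^(i:ℕ))^2 = 1 := by
      intro i
      rw [← pow_mul, mul_comm, pow_mul]
      norm_num
    have hlam : ∀ i, lam i = (-1:ℝ)^(i:ℕ) * ((-1:ℝ)^(i:ℕ) * lam i) := by
      intro i
      rw [← mul_assoc, ← sq, hsq1 i, one_mul]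
    have hlamsq : ∀ i, (lam i)^2 = ((-1:ℝ)^(i:ℕ) * lam i)^2 := by
      intro i
      rw [mul_pow, hsq1 i, one_mul]
    have hlamne : ∀ i, lam i ≠ 0 := by
      intro i h
      have := hpos i
      rw [h, mul_zero] at this
      exact lt_irrefl _ this
    have hlaminj : Function.Injective lam := by
      intro i j hij
      have h1 : |lam i| = |lam j| := by rw [hij]
      have habs : ∀ k : Fin n, |lam k| = (-1:ℝ)^(k:ℕ) * lam k := by
        intro k
        have h2 : |(-1:ℝ)^(k:ℕ) * lam k| = |lam k| := by
          rw [abs_mul, _root_.abs_pow, abs_neg, abs_one, one_pow, one_mul]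
        rw [← h2, abs_of_pos (hpos k)]
      rw [habs i, habs j] at h1
      exact hmono.injective h1
    have hevalp : ∀ t : ℝ, p.eval t = ∏ i, (t - lam i) := by
      intro t
      rw [hfact, Polynomial.eval_prod]
      simp
    have hevalPC : ∀ w : ℂ, P.eval w = ∏ i, (w - ((lam i : ℝ) : ℂ)) := by
      intro w
      rw [hPdef, hfact, Polynomial.map_prod, Polynomial.eval_prod]
      simp
    by_contra hre
    push_neg at hre
    rcases eq_or_lt_of_le hre with hre0 | hrepos
    · -- purely imaginary root: impossible
      set y := z.im with hy
      have hz' : z = (y:ℂ) * I := by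
        apply Complex.ext <;> simp [← hre0, hy]
      have h0 := hQPe z
      rw [hzr, hz'] at h0
      have e1 : I * ((y:ℂ) * I) = ((-y:ℝ):ℂ) := by
        push_cast
        linear_combination (y:ℂ) * Complex.I_sq
      have e2 : -(I * ((y:ℂ) * I)) = ((y:ℝ):ℂ) := by
        push_cast
        linear_combination (-(y:ℂ)) * Complex.I_sq
      rw [e1, show -(((-y:ℝ):ℂ)) = ((y:ℝ):ℂ) by push_cast; ring, evalPreal, evalPreal] at h0
      set u := p.eval (-y) with hu
      set v := p.eval y with hv
      have hre' := congrArg Complex.re h0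
      have him' := congrArg Complex.im h0
      simp [Complex.add_re, Complex.add_im, Complex.div_re, Complex.div_im,
        Complex.normSq_apply] at hre' him'
      have huv : u = 0 ∧ v = 0 := by constructor <;> nlinarith [hre', him']
      obtain ⟨i, hi⟩ : ∃ i, y - lam i = 0 := by
        have h2 := huv.2
        rw [hv, hevalp y] at h2
        obtain ⟨i, _, hi⟩ := Finset.prod_eq_zero_iff.mp h2
        exact ⟨i, hi⟩
      obtain ⟨j, hj⟩ : ∃ j, -y - lam j = 0 := by
        have h2 := huv.1
        rw [hu, hevalp (-y)] at h2
        obtain ⟨j, _, hj⟩ := Finset.prod_eq_zero_iff.mp h2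
        exact ⟨j, hj⟩
      have hij : lam j = -lam i := by
        have := sub_eq_zero.mp hi
        have := sub_eq_zero.mp hj
        linarith [sub_eq_zero.mp hi, sub_eq_zero.mp hj]
      have hijeq : i = j := by
        apply hmono.injective
        show (-1:ℝ)^(i:ℕ) * lam i = (-1:ℝ)^(j:ℕ) * lam j
        have h2 : (lam i)^2 = (lam j)^2 := by rw [hij]; ring
        rw [hlamsq i, hlamsq j] at h2
        have hpi := hpos i
        have hpj := hpos j
        apply le_antisymm <;> nlinarith [h2, hpi, hpj]
      rw [← hijeq] at hij
      exact hlamne i (by linarith)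
    · -- root with positive real part
      set w : ℂ := I * z with hw
      have hwim : 0 < w.im := by
        rw [hw]
        simpa using hrepos
      have hfac_ne : ∀ i : Fin n, w - ((lam i:ℝ):ℂ) ≠ 0 := by
        intro i h
        have h2 : (w - ((lam i:ℝ):ℂ)).im = w.im := by simp
        rw [h] at h2
        simp at h2
        linarith
      have hPw : P.eval w ≠ 0 := by
        rw [hevalPC]
        exact Finset.prod_ne_zero_iff.mpr (fun i _ => hfac_ne i)
      have h0 := hQPe z
      rw [hzr, ← hw] at h0
      have hPF : P.eval (-w) = -I * P.eval w := by
        have hbne : ((1-I)/2 : ℂ) ≠ 0 := by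
          intro h
          have := congrArg Complex.im h
          simp at this
        have key : ((1-I)/2 : ℂ) * (P.eval (-w) - (-I * P.eval w)) = 0 := by
          linear_combination -h0 - ((P.eval w)/2) * Complex.I_sq
        rcases mul_eq_zero.mp key with h | h
        · exact absurd h hbne
        · exact sub_eq_zero.mp h
      -- Lagrange interpolation
      have hinj : Set.InjOn lam (Finset.univ : Finset (Fin n)) := fun i _ j _ h => hlaminj h
      set Dp : Polynomial ℝ := p.comp (-Polynomial.X) - Polynomial.C ((-1:ℝ)^n) * p with hDp
      have hdeg1 : (∏ i, (Polynomial.X + Polynomial.C (lam i)) : Polynomial ℝ).natDegree = n := by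
        rw [natDegree_prod _ _ (fun i _ => (monic_X_add_C (lam i)).ne_zero)]
        simp [natDegree_X_add_C]
      have hdeg2 : (∏ i, (Polynomial.X - Polynomial.C (lam i)) : Polynomial ℝ).natDegree = n := by
        rw [natDegree_prod _ _ (fun i _ => (monic_X_sub_C (lam i)).ne_zero)]
        simp [natDegree_X_sub_C]
      have hmon1 : (∏ i, (Polynomial.X + Polynomial.C (lam i)) : Polynomial ℝ).Monic :=
        monic_prod_of_monic _ _ (fun i _ => monic_X_add_C _)
      have hmon2 : (∏ i, (Polynomial.X - Polynomial.C (lam i)) : Polynomial ℝ).Monic :=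
        monic_prod_of_monic _ _ (fun i _ => monic_X_sub_C _)
      have hpcomp : p.comp (-Polynomial.X) =
          Polynomial.C ((-1:ℝ)^n) * ∏ i, (Polynomial.X + Polynomial.C (lam i)) := by
        rw [hfact, Polynomial.prod_comp]
        have hc : ∀ i : Fin n, (Polynomial.X - Polynomial.C (lam i)).comp (-Polynomial.X)
            = (-1 : Polynomial ℝ) * (Polynomial.X + Polynomial.C (lam i)) := by
          intro i
          rw [sub_comp, X_comp, C_comp]
          ring
        rw [Finset.prod_congr rfl (fun i _ => hc i), Finset.prod_mul_distrib,
          Finset.prod_const, Finset.card_univ, Fintype.card_fin]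
        congr 1
        rw [← C_1, ← C_neg, ← C_pow]
      have hDdeg : Dp.degree < ((Finset.univ : Finset (Fin n)).card : ℕ) := by
        rw [Finset.card_univ, Fintype.card_fin, hDp, hpcomp]
        conv_lhs => rw [hfact]
        rw [← mul_sub]
        have hcne0 : ((-1:ℝ)^n) ≠ 0 := pow_ne_zero _ (by norm_num)
        rw [degree_C_mul hcne0]
        have hdd : (∏ i, (Polynomial.X + Polynomial.C (lam i)) : Polynomial ℝ).degree
            = (∏ i, (Polynomial.X - Polynomial.C (lam i)) : Polynomial ℝ).degree := by
          rw [degree_eq_natDegree hmon1.ne_zero, degree_eq_natDegree hmon2.ne_zero, hdeg1, hdeg2]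
        have hlc : (∏ i, (Polynomial.X + Polynomial.C (lam i)) : Polynomial ℝ).leadingCoeff
            = (∏ i, (Polynomial.X - Polynomial.C (lam i)) : Polynomial ℝ).leadingCoeff := by
          rw [hmon1.leadingCoeff, hmon2.leadingCoeff]
        have hsub := degree_sub_lt hdd hmon1.ne_zero hlc
        calc (∏ i, (Polynomial.X + Polynomial.C (lam i)) -
              ∏ i, (Polynomial.X - Polynomial.C (lam i)) : Polynomial ℝ).degree
            < (∏ i, (Polynomial.X + Polynomial.C (lam i)) : Polynomial ℝ).degree := hsub
          _ = ((n : ℕ) : WithBot ℕ) := by rw [degree_eq_natDegree hmon1.ne_zero, hdeg1]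
      have hlag := Lagrange.eq_interpolate hinj hDdeg
      have haev : ∀ (f : Polynomial ℝ) (t : ℂ),
          Polynomial.aeval t f = (f.map (algebraMap ℝ ℂ)).eval t := by
        intro f t
        rw [Polynomial.aeval_def, Polynomial.eval_map]
      have hproot : ∀ i : Fin n, p.eval (lam i) = 0 := by
        intro i
        rw [hevalp]
        exact Finset.prod_eq_zero (Finset.mem_univ i) (by ring)
      have hDval : ∀ i : Fin n, Dp.eval (lam i) = p.eval (-(lam i)) := by
        intro i
        rw [hDp]
        simp [eval_comp, hproot i]
      have hlamne2 : ∀ (k j : Fin n), j ≠ k → lam k - lam j ≠ 0 := by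
        intro k j hj
        exact sub_ne_zero.mpr (fun h => hj (hlaminj h.symm))
      have hbasis : ∀ k : Fin n, Polynomial.aeval w (Lagrange.basis Finset.univ lam k) =
          (((∏ j ∈ Finset.univ.erase k, (lam k - lam j))⁻¹ : ℝ) : ℂ)
            * (P.eval w * (w - ((lam k:ℝ):ℂ))⁻¹) := by
        intro k
        rw [Lagrange.basis, _root_.map_prod]
        have hterm : ∀ j ∈ Finset.univ.erase k,
            Polynomial.aeval w (Lagrange.basisDivisor (lam k) (lam j))
              = ((((lam k - lam j)⁻¹ : ℝ)):ℂ) * (w - ((lam j:ℝ):ℂ)) := by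
          intro j _
          rw [Lagrange.basisDivisor]
          simp
        rw [Finset.prod_congr rfl hterm, Finset.prod_mul_distrib]
        congr 1
        · push_cast
          rw [Finset.prod_inv_distrib]
        · rw [hevalPC, ← Finset.mul_prod_erase Finset.univ _ (Finset.mem_univ k),
            mul_comm (w - ((lam k:ℝ):ℂ)), mul_assoc,
            mul_inv_cancel₀ (hfac_ne k), mul_one]
      set Ck : Fin n → ℝ := fun k =>
        p.eval (-(lam k)) * (∏ j ∈ Finset.univ.erase k, (lam k - lam j))⁻¹ with hCkdef
      have hL : Polynomial.aeval w Dp = P.eval (-w) - ((-1:ℂ)^n) * P.eval w := by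
        rw [hDp, _root_.map_sub, _root_.map_mul, Polynomial.aeval_C, Polynomial.aeval_comp,
          _root_.map_neg, Polynomial.aeval_X, haev p, haev p]
        simp only [Complex.coe_algebraMap]
        push_cast
        ring
      have hR : Polynomial.aeval w
            (Lagrange.interpolate Finset.univ lam (fun i => Dp.eval (lam i)))
          = ∑ i, ((Ck i : ℝ):ℂ) * (P.eval w * (w - ((lam i:ℝ):ℂ))⁻¹) := by
        rw [Lagrange.interpolate_apply, _root_.map_sum]
        apply Finset.sum_congr rfl
        intro i _
        rw [_root_.map_mul, Polynomial.aeval_C, hbasis i, hDval i, hCkdef]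
        simp only [Complex.coe_algebraMap]
        push_cast
        ring
      have hmain : P.eval (-w) - ((-1:ℂ)^n) * P.eval w
          = ∑ i, ((Ck i : ℝ):ℂ) * (P.eval w * (w - ((lam i:ℝ):ℂ))⁻¹) := by
        calc P.eval (-w) - ((-1:ℂ)^n) * P.eval w = Polynomial.aeval w Dp := hL.symm
          _ = Polynomial.aeval w
              (Lagrange.interpolate Finset.univ lam (fun i => Dp.eval (lam i))) := by
              conv_lhs => rw [hlag]
          _ = _ := hR
      have hGmul : (-I - (-1:ℂ)^n) * P.eval w
          = (∑ i, ((Ck i:ℝ):ℂ) * (w - ((lam i:ℝ):ℂ))⁻¹) * P.eval w := by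
        rw [Finset.sum_mul]
        calc (-I - (-1:ℂ)^n) * P.eval w
            = P.eval (-w) - ((-1:ℂ)^n) * P.eval w := by rw [hPF]; ring
          _ = ∑ i, ((Ck i : ℝ):ℂ) * (P.eval w * (w - ((lam i:ℝ):ℂ))⁻¹) := hmain
          _ = ∑ i, ((Ck i : ℝ):ℂ) * (w - ((lam i:ℝ):ℂ))⁻¹ * P.eval w :=
              Finset.sum_congr rfl (fun i _ => by ring)
      have hG := mul_right_cancel₀ hPw hGmul
      have hCkneg : ∀ k : Fin n, Ck k < 0 := by
        intro k
        have hpe : p.eval (-(lam k)) =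
            (-(2 * lam k)) * ∏ j ∈ Finset.univ.erase k, (-(lam k) - lam j) := by
          rw [hevalp, ← Finset.mul_prod_erase Finset.univ _ (Finset.mem_univ k),
            show -lam k - lam k = -(2*lam k) by ring]
        rw [hCkdef]
        simp only
        rw [hpe, ← Finset.prod_inv_distrib, mul_assoc, ← Finset.prod_mul_distrib]
        set u : Fin n → ℝ := fun j => (-(lam k) - lam j) * (lam k - lam j)⁻¹ with hudef
        have hsqr : ∀ j : Fin n, j ≠ k → ((lam k + lam j) * (lam k - lam j)⁻¹)
            = ((lam k)^2 - (lam j)^2) / (lam k - lam j)^2 := by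
          intro j hj
          field_simp [hlamne2 k j hj]
          ring
        have hIio : ∀ j ∈ Finset.Iio k, u j < 0 := by
          intro j hj
          have hjk : j < k := Finset.mem_Iio.mp hj
          have hjne : j ≠ k := ne_of_lt hjk
          have hd : 0 < (lam k)^2 - (lam j)^2 := by
            have h1 : (-1:ℝ)^(j:ℕ) * lam j < (-1:ℝ)^(k:ℕ) * lam k := hmono hjk
            have h2 := hpos j
            rw [hlamsq k, hlamsq j]
            nlinarith
          have hrat : 0 < (lam k + lam j) * (lam k - lam j)⁻¹ := by
            rw [hsqr j hjne]
            exact div_pos hd (pow_two_pos_of_ne_zero (hlamne2 k j hjne))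
          have hueq : u j = -((lam k + lam j) * (lam k - lam j)⁻¹) := by rw [hudef]; ring
          rw [hueq]
          linarith
        have hIoi : ∀ j ∈ Finset.Ioi k, 0 < u j := by
          intro j hj
          have hjk : k < j := Finset.mem_Ioi.mp hj
          have hjne : j ≠ k := (ne_of_lt hjk).symm
          have hd : (lam k)^2 - (lam j)^2 < 0 := by
            have h1 : (-1:ℝ)^(k:ℕ) * lam k < (-1:ℝ)^(j:ℕ) * lam j := hmono hjk
            have h2 := hpos k
            rw [hlamsq k, hlamsq j]
            nlinarith
          have hrat : (lam k + lam j) * (lam k - lam j)⁻¹ < 0 := by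
            rw [hsqr j hjne]
            exact div_neg_of_neg_of_pos hd (pow_two_pos_of_ne_zero (hlamne2 k j hjne))
          have hueq : u j = -((lam k + lam j) * (lam k - lam j)⁻¹) := by rw [hudef]; ring
          rw [hueq]
          linarith
        have hdisj : Disjoint (Finset.Iio k) (Finset.Ioi k) := by
          rw [Finset.disjoint_left]
          intro j h1 h2
          exact absurd (Finset.mem_Iio.mp h1) (not_lt.mpr (le_of_lt (Finset.mem_Ioi.mp h2)))
        rw [erase_eq_Iio_union_Ioi k, Finset.prod_union hdisj]
        have hS1 := prod_neg_sign (Finset.Iio k) u hIio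
        rw [Fin.card_Iio] at hS1
        have hS2 : 0 < ∏ j ∈ Finset.Ioi k, u j := Finset.prod_pos hIoi
        have hposk := hpos k
        have hlampos : 0 < lam k * ∏ j ∈ Finset.Iio k, u j := by
          nlinarith [mul_pos hposk hS1, hsq1 k]
        nlinarith [mul_pos hlampos hS2]
      have him := congrArg Complex.im hG
      have hLim : (-I - (-1:ℂ)^n).im = -1 := by
        rcases Nat.even_or_odd n with he | ho
        · rw [he.neg_one_pow]
          simp
        · rw [ho.neg_one_pow]
          simp
      have hterm : ∀ i : Fin n, (((Ck i:ℝ):ℂ) * (w - ((lam i:ℝ):ℂ))⁻¹).im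
          = (-(Ck i)) * w.im / Complex.normSq (w - ((lam i:ℝ):ℂ)) := by
        intro i
        rw [Complex.mul_im, Complex.ofReal_re, Complex.ofReal_im, Complex.inv_im,
          show (w - ((lam i:ℝ):ℂ)).im = w.im by simp]
        ring
      rw [hLim, Complex.im_sum, Finset.sum_congr rfl (fun i _ => hterm i)] at him
      have : Nonempty (Fin n) := ⟨⟨0, hn⟩⟩
      have hpos' : 0 < ∑ i, (-(Ck i)) * w.im / Complex.normSq (w - ((lam i:ℝ):ℂ)) := by
        apply Finset.sum_pos
        · intro i _
          apply div_pos
          · exact mul_pos (by linarith [hCkneg i]) hwim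
          · exact Complex.normSq_pos.mpr (hfac_ne i)
        · exact Finset.univ_nonempty
      linarith
  · -- backward direction: Hurwitz ⟹ SI
    intro hroots
    have hpne : p ≠ 0 := hm.ne_zero
    have hNE : Nonempty (Fin n) := ⟨⟨0, hn⟩⟩
    have hcard : Multiset.card Q.roots = n := by
      rw [← hQdeg]
      exact splits_iff_card_roots.mp hsplitsQ
    obtain ⟨f, hf⟩ := multiset_enum n Q.roots hcard
    have hfmem : ∀ i : Fin n, f i ∈ Q.roots := by
      intro i
      rw [hf]
      exact Multiset.mem_map_of_mem f (Finset.mem_val.mpr (Finset.mem_univ i))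
    have hfre : ∀ i, (f i).re < 0 := fun i => hroots (f i) (by rw [hcR]; exact hfmem i)
    set A : Fin n → ℝ := fun i => -(f i).re with hA
    set B : Fin n → ℝ := fun i => (f i).im with hB
    have hApos : ∀ i, 0 < A i := by
      intro i
      simp only [hA]
      linarith [hfre i]
    set g : Fin n → ℝ → ℝ := fun i x => Real.arctan ((x - B i)/ A i) with hg
    set th : ℝ → ℝ := fun x => ∑ i, g i x with hth
    have hthmono : StrictMono th := by
      intro a b hab
      apply Finset.sum_lt_sum_of_nonempty Finset.univ_nonempty
      intro i _
      simp only [hg]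
      exact Real.arctan_strictMono ((div_lt_div_iff_of_pos_right (hApos i)).mpr (by linarith))
    have hthcont : Continuous th := by
      apply continuous_finset_sum
      intro i _
      simp only [hg]
      exact Real.continuous_arctan.comp ((continuous_id.sub continuous_const).div_const _)
    have hkey : ∀ x : ℝ, ∑ i, Real.arctan ((x + B i)/A i)
        = ∑ i, Real.arctan ((x - B i)/A i) := by
      intro x
      have h1 : ∀ h : ℂ → ℝ, ∑ i, h (f i) = (Multiset.map h Q.roots).sum := by
        intro h
        rw [hf, Multiset.map_map]
        rfl
      set h : ℂ → ℝ := fun mu => Real.arctan ((x - mu.im)/(-mu.re)) with hh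
      have e1 : ∀ i, Real.arctan ((x - B i)/A i) = h (f i) := by
        intro i
        simp only [hh, hA, hB]
      have e2 : ∀ i, Real.arctan ((x + B i)/A i) = h ((starRingEnd ℂ) (f i)) := by
        intro i
        simp only [hh, hA, hB, Complex.conj_re, Complex.conj_im, sub_neg_eq_add]
      calc ∑ i, Real.arctan ((x + B i)/A i)
          = ∑ i, (h ∘ (starRingEnd ℂ)) (f i) := Finset.sum_congr rfl (fun i _ => e2 i)
        _ = (Multiset.map (h ∘ (starRingEnd ℂ)) Q.roots).sum := h1 _
        _ = (Multiset.map h (Multiset.map (starRingEnd ℂ) Q.roots)).sum := by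
            rw [Multiset.map_map]
        _ = (Multiset.map h Q.roots).sum := by rw [hrootsconj]
        _ = ∑ i, h (f i) := (h1 h).symm
        _ = ∑ i, Real.arctan ((x - B i)/A i) := Finset.sum_congr rfl (fun i _ => (e1 i).symm)
    have hthodd : ∀ x, th (-x) = -th x := by
      intro x
      simp only [hth]
      calc ∑ i, g i (-x) = ∑ i, -(Real.arctan ((x + B i)/A i)) := by
            apply Finset.sum_congr rfl
            intro i _
            simp only [hg]
            rw [show (-x - B i)/A i = -((x + B i)/A i) by ring, Real.arctan_neg]
        _ = -∑ i, Real.arctan ((x + B i)/A i) := by rw [Finset.sum_neg_distrib]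
        _ = -∑ i, Real.arctan ((x - B i)/A i) := by rw [hkey x]
        _ = -∑ i, g i x := by simp only [hg]
    have hth0 : th 0 = 0 := by
      have h0 := hthodd 0
      rw [neg_zero] at h0
      linarith
    have hthtop : Filter.Tendsto th Filter.atTop (nhds (n * (Real.pi/2))) := by
      have hterm : ∀ i : Fin n, Filter.Tendsto (g i) Filter.atTop (nhds (Real.pi/2)) := by
        intro i
        simp only [hg]
        have h1 : Filter.Tendsto (fun x : ℝ => (x - B i)/A i) Filter.atTop Filter.atTop := by
          apply Filter.Tendsto.atTop_div_const (hApos i)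
          exact Filter.tendsto_atTop_add_const_right _ _ Filter.tendsto_id
        exact (Real.tendsto_arctan_atTop.mono_right nhdsWithin_le_nhds).comp h1
      have h2 := tendsto_finset_sum Finset.univ (fun i (_ : i ∈ Finset.univ) => hterm i)
      simp only [Finset.sum_const, Finset.card_univ, Fintype.card_fin, nsmul_eq_mul] at h2
      exact h2
    have hvlt : ∀ i : Fin n, (2*(i:ℕ)+1) * Real.pi/4 < n * (Real.pi/2) := by
      intro i
      have h1 : ((i:ℕ):ℝ) + 1 ≤ (n:ℝ) := by exact_mod_cast i.isLt
      linarith [mul_pos Real.pi_pos (show (0:ℝ) < 2*(n:ℝ) - 2*((i:ℕ):ℝ) - 1 by linarith)]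
    have hvpos : ∀ i : Fin n, 0 < (2*(i:ℕ)+1) * Real.pi/4 := by
      intro i
      positivity
    have hexx : ∀ i : Fin n, ∃ xi : ℝ, 0 < xi ∧ th xi = (2*(i:ℕ)+1) * Real.pi/4 := by
      intro i
      obtain ⟨M, hM1, hM2⟩ := ((hthtop.eventually (eventually_gt_nhds (hvlt i))).and
        (Filter.eventually_ge_atTop (0:ℝ))).exists
      obtain ⟨xi, _, hxi⟩ := intermediate_value_Icc hM2 hthcont.continuousOn
        ⟨by rw [hth0]; exact (hvpos i).le, hM1.le⟩
      refine ⟨xi, ?_, hxi⟩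
      have h3 : th 0 < th xi := by
        rw [hth0, hxi]
        exact hvpos i
      exact hthmono.lt_iff_lt.mp h3
    choose xx hxxpos hxxval using hexx
    set lam : Fin n → ℝ := fun i => (-1:ℝ)^(i:ℕ) * xx i with hlamdef
    have hsq1 : ∀ i : Fin n, ((-1:ℝ)^(i:ℕ))^2 = 1 := by
      intro i
      rw [← pow_mul, mul_comm, pow_mul]
      norm_num
    have hsign : ∀ i : Fin n, (-1:ℝ)^(i:ℕ) * lam i = xx i := by
      intro i
      simp only [hlamdef]
      rw [← mul_assoc, ← sq, hsq1 i, one_mul]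
    -- evaluation formula for p along the reals
    have hcard' : Multiset.card Q.roots = Q.natDegree := by rw [hcard, hQdeg]
    have hQfact := C_leadingCoeff_mul_prod_multiset_X_sub_C hcard'
    have hQeval : ∀ u : ℂ, Q.eval u = ((q'.coeff n : ℝ):ℂ) * ∏ i, (u - f i) := by
      intro u
      conv_lhs => rw [← hQfact]
      rw [eval_mul, eval_C, hcrQ, hf, Multiset.map_map, Polynomial.eval_multiset_prod,
        Multiset.map_map, Finset.prod_eq_multiset_prod]
      congr 1
      apply congrArg Multiset.prod
      apply Multiset.map_congr rfl
      intro i _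
      simp
    set R : ℝ → ℝ := fun x => ∏ i, Real.sqrt ((A i)^2 + (x - B i)^2) with hRdef
    have hRpos : ∀ x, 0 < R x := by
      intro x
      simp only [hRdef]
      exact Finset.prod_pos (fun i _ => Real.sqrt_pos.mpr
        (add_pos_of_pos_of_nonneg (pow_pos (hApos i) 2) (sq_nonneg _)))
    have hpx : ∀ x : ℝ, p.eval x = q'.coeff n * R x
        * (Real.cos (th x) - Real.sin (th x)) := by
      intro x
      have hfac : ∀ i : Fin n, (I*(x:ℂ)) - f i
          = ((A i : ℝ):ℂ) + ((x - B i : ℝ):ℂ) * I := by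
        intro i
        simp only [hA, hB]
        apply Complex.ext <;> simp
      have hpolar : ∀ i : Fin n, (I*(x:ℂ)) - f i
          = ((Real.sqrt ((A i)^2 + (x - B i)^2) : ℝ):ℂ)
            * Complex.exp (((g i x : ℝ):ℂ) * I) := by
        intro i
        rw [hfac i, polar_decomp _ _ (hApos i)]
      have hV : Q.eval (I*(x:ℂ)) = ((q'.coeff n:ℝ):ℂ) * (((R x:ℝ):ℂ)
          * Complex.exp (((th x:ℝ):ℂ) * I)) := by
        rw [hQeval, Finset.prod_congr rfl (fun i _ => hpolar i), Finset.prod_mul_distrib]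
        have e1 : (∏ i, ((Real.sqrt ((A i)^2 + (x - B i)^2) : ℝ):ℂ)) = ((R x:ℝ):ℂ) := by
          simp only [hRdef]
          rw [Complex.ofReal_prod]
        have e2 : (∏ i, Complex.exp (((g i x : ℝ):ℂ) * I))
            = Complex.exp (((th x:ℝ):ℂ) * I) := by
          rw [← Complex.exp_sum]
          congr 1
          simp only [hth]
          rw [← Finset.sum_mul, ← Complex.ofReal_sum]
        rw [e1, e2]
      have hPx0 : ((p.eval x : ℝ):ℂ)
          = (1+I)/2 * Q.eval (I*(x:ℂ)) + (1-I)/2 * Q.eval (-(I*(x:ℂ))) := by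
        rw [← hPQe]
        exact (evalPreal x).symm
      have hconj : Q.eval (-(I*(x:ℂ))) = (starRingEnd ℂ) (Q.eval (I*(x:ℂ))) := by
        rw [← hQconjeval]
        congr 1
        apply Complex.ext <;> simp
      rw [hconj, hV, _root_.map_mul, _root_.map_mul, Complex.conj_ofReal, Complex.conj_ofReal,
        ← Complex.exp_conj,
        show (starRingEnd ℂ) (((th x:ℝ):ℂ) * I) = ((-(th x):ℝ):ℂ) * I by
          rw [_root_.map_mul, Complex.conj_ofReal, Complex.conj_I]; push_cast; ring,
        Complex.exp_mul_I, Complex.exp_mul_I] at hPx0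
      simp only [← Complex.ofReal_cos, ← Complex.ofReal_sin, Real.cos_neg, Real.sin_neg]
        at hPx0
      have hfin : ((p.eval x : ℝ):ℂ)
          = ((q'.coeff n * R x * (Real.cos (th x) - Real.sin (th x)) : ℝ):ℂ) := by
        rw [hPx0, Complex.ofReal_mul, Complex.ofReal_mul, Complex.ofReal_sub,
          Complex.ofReal_neg]
        linear_combination (((q'.coeff n:ℝ):ℂ) * ((R x:ℝ):ℂ)
          * ((Real.sin (th x):ℝ):ℂ)) * Complex.I_sq
      exact_mod_cast hfin
    -- the roots of p
    have hproot : ∀ i : Fin n, p.eval (lam i) = 0 := by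
      intro i
      rw [hpx]
      have hzero : Real.cos (th (lam i)) - Real.sin (th (lam i)) = 0 := by
        obtain ⟨k, hk⟩ : ∃ k : ℤ, th (lam i) = Real.pi/4 + k * Real.pi := by
          rcases Nat.even_or_odd (i:ℕ) with he | ho
          · obtain ⟨m, hm⟩ := he
            refine ⟨(m:ℤ), ?_⟩
            have hpow : (-1:ℝ)^(i:ℕ) = 1 := by
              rw [hm]
              exact Even.neg_one_pow ⟨m, rfl⟩
            have hlami : lam i = xx i := by
              simp only [hlamdef]
              rw [hpow, one_mul]
            rw [hlami, hxxval i, hm]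
            push_cast
            ring
          · obtain ⟨m, hm⟩ := ho
            refine ⟨-((m:ℤ)+1), ?_⟩
            have hpow : (-1:ℝ)^(i:ℕ) = -1 := by
              rw [hm]
              exact Odd.neg_one_pow ⟨m, rfl⟩
            have hlami : lam i = -xx i := by
              simp only [hlamdef]
              rw [hpow]
              ring
            rw [hlami, hthodd, hxxval i, hm]
            push_cast
            ring
        rw [hk]
        exact cos_sub_sin_eq_zero k
      rw [hzero, mul_zero]
    have hlaminj : Function.Injective lam := by
      intro a b hab
      have habs : ∀ k, |lam k| = xx k := by
        intro k
        simp only [hlamdef]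
        rw [abs_mul, _root_.abs_pow, abs_neg, abs_one, one_pow, one_mul,
          abs_of_pos (hxxpos k)]
      have h1 : xx a = xx b := by
        have h2 : |lam a| = |lam b| := by rw [hab]
        rwa [habs a, habs b] at h2
      have h3 : th (xx a) = th (xx b) := by rw [h1]
      rw [hxxval a, hxxval b] at h3
      by_contra hne
      rcases (Fin.val_ne_of_ne hne).lt_or_gt with h | h
      · have h4 : ((a:ℕ):ℝ) < ((b:ℕ):ℝ) := by exact_mod_cast h
        linarith [mul_pos Real.pi_pos (show (0:ℝ) < ((b:ℕ):ℝ) - ((a:ℕ):ℝ) by linarith)]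
      · have h4 : ((b:ℕ):ℝ) < ((a:ℕ):ℝ) := by exact_mod_cast h
        linarith [mul_pos Real.pi_pos (show (0:ℝ) < ((a:ℕ):ℝ) - ((b:ℕ):ℝ) by linarith)]
    have hmem2 : ∀ i, lam i ∈ p.roots := fun i => Polynomial.mem_roots'.mpr ⟨hpne, hproot i⟩
    have hle : Multiset.map lam Finset.univ.val ≤ p.roots := by
      rw [Multiset.le_iff_count]
      intro a
      by_cases ha : ∃ i, lam i = a
      · obtain ⟨i, rfl⟩ := ha
        rw [Multiset.count_map_eq_count' lam _ hlaminj,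
          Multiset.count_eq_one_of_mem Finset.univ.nodup
            (Finset.mem_val.mpr (Finset.mem_univ i))]
        exact Multiset.one_le_count_iff_mem.mpr (hmem2 i)
      · rw [Multiset.count_eq_zero.mpr
          (fun hmem3 => ha (by
            obtain ⟨i, _, hi⟩ := Multiset.mem_map.mp hmem3
            exact ⟨i, hi⟩))]
        exact Nat.zero_le _
    have hcardmap : Multiset.card (Multiset.map lam Finset.univ.val) = n := by simp
    have hrootseq : p.roots = Multiset.map lam Finset.univ.val :=
      (Multiset.eq_of_le_of_card_le hle (by
        rw [hcardmap, ← hdeg]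
        exact p.card_roots')).symm
    have hsplitp : p.Splits := by
      rw [splits_iff_card_roots, hrootseq, hcardmap, hdeg]
    have hfacp := hsplitp.eq_prod_roots_of_monic hm
    rw [hrootseq, Multiset.map_map] at hfacp
    refine ⟨lam, ?_, ?_, ?_⟩
    · rw [hfacp, Finset.prod_eq_multiset_prod]
      rfl
    · intro a b hab
      show (-1:ℝ)^(a:ℕ) * lam a < (-1:ℝ)^(b:ℕ) * lam b
      rw [hsign a, hsign b]
      apply hthmono.lt_iff_lt.mp
      rw [hxxval a, hxxval b]
      have h4 : ((a:ℕ):ℝ) < ((b:ℕ):ℝ) := by exact_mod_cast hab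
      linarith [mul_pos Real.pi_pos (show (0:ℝ) < ((b:ℕ):ℝ) - ((a:ℕ):ℝ) by linarith)]
    · intro i
      rw [hsign i]
      exact hxxpos i
end
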